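/- arXiv:2111.03513 — 4 statements merged into one kernel-verified Lean document; each statement's English description precedes it below -/
import Mathlib

section
/- Let G be a finite group of orthogonal transformations of ℝ^N generated by reflections σ_α, α ∈ R, for a normalized root system R, and let d(x,y) = min_{σ∈G} ‖x − σ(y)‖. If x, y ∈ ℝ^N satisfy ‖x − y‖ ≤ ‖x − σ_α(y)‖ for every α ∈ R, then d(x,y) = ‖x − y‖. -/
open scoped RealInnerProductSpace
noncomputable section

/-- `ℝ^N` with the Euclidean structure. -/
abbrev Euc (N : ℕ) := EuclideanSpace ℝ (Fin N)

/-- The reflection `σ_α` in the hyperplane orthogonal to `α`. -/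
def sigmaRefl {N : ℕ} (α : Euc N) : Euc N ≃ₗᵢ[ℝ] Euc N :=
  Submodule.reflection (ℝ ∙ α)ᗮ

/-- The orbit distance `d(x,y) = min_{σ ∈ G} ‖x − σ(y)‖`. -/
def orbDist {N : ℕ} (G : Subgroup (Euc N ≃ₗᵢ[ℝ] Euc N)) (x y : Euc N) : ℝ :=
  ⨅ σ : G, ‖x - (σ : Euc N ≃ₗᵢ[ℝ] Euc N) y‖

/-- The hypotheses defining a normalized root system. -/
structure IsNormalizedRootSystem {N : ℕ} (R : Finset (Euc N)) : Prop where
  ne_zero : (0 : Euc N) ∉ R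
  neg_mem : ∀ α ∈ R, -α ∈ R
  smul_mem : ∀ α ∈ R, ∀ c : ℝ, c • α ∈ R → c • α = α ∨ c • α = -α
  refl_mem : ∀ α ∈ R, ∀ β ∈ R, sigmaRefl α β ∈ R
  norm_eq : ∀ α ∈ R, ‖α‖ = Real.sqrt 2

/-- The Coxeter (reflection) group generated by the reflections `σ_α`, `α ∈ R`. -/
def coxeterGroup {N : ℕ} (R : Finset (Euc N)) : Subgroup (Euc N ≃ₗᵢ[ℝ] Euc N) :=
  Subgroup.closure ((fun α => sigmaRefl α) '' (R : Set (Euc N)))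

variable {N : ℕ}

lemma sigma_apply_gen (α v : Euc N) :
    sigmaRefl α v = v - (2 * (⟪α, v⟫ / (‖α‖ ^ 2))) • α := by
  rw [sigmaRefl, Submodule.reflection_orthogonal_apply, Submodule.reflection_singleton_apply]
  simp only [RCLike.ofReal_real_eq_id, id_eq, two_smul, two_mul, add_smul]
  abel

lemma sigma_apply {α : Euc N} (hα : ⟪α, α⟫ = 2) (v : Euc N) :
    sigmaRefl α v = v - ⟪α, v⟫ • α := by
  rw [sigma_apply_gen, ← real_inner_self_eq_norm_sq, hα]
  ring_nf

lemma sigma_neg (α : Euc N) : sigmaRefl (-α) = sigmaRefl α := by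
  unfold sigmaRefl
  congr 2
  rw [show (-α) = (-1 : ℝ) • α by simp]
  exact Submodule.span_singleton_smul_eq (isUnit_one.neg) α

lemma sigma_sq (α : Euc N) : sigmaRefl α * sigmaRefl α = 1 :=
  Submodule.reflection_mul_reflection _

lemma sigma_inv (α : Euc N) : (sigmaRefl α)⁻¹ = sigmaRefl α :=
  Submodule.reflection_inv

lemma sigma_invol (α v : Euc N) : sigmaRefl α (sigmaRefl α v) = v :=
  Submodule.reflection_reflection _ v

lemma sigma_conj (g : Euc N ≃ₗᵢ[ℝ] Euc N) (α : Euc N) :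
    sigmaRefl (g α) = g * sigmaRefl α * g⁻¹ := by
  apply LinearIsometryEquiv.ext
  intro v
  have h1 : ‖g α‖ = ‖α‖ := g.norm_map α
  have h2 : ⟪g α, v⟫ = ⟪α, g.symm v⟫ := by
    rw [← g.inner_map_map α (g.symm v), g.apply_symm_apply]
  show sigmaRefl (g α) v = g (sigmaRefl α (g.symm v))
  rw [sigma_apply_gen, sigma_apply_gen, map_sub, map_smul, h1, h2]
  simp

end
section Grp
variable {N : ℕ}

lemma lie_mul_apply (f g : Euc N ≃ₗᵢ[ℝ] Euc N) (v : Euc N) : (f * g) v = f (g v) := rfl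

lemma lie_inv_apply (f : Euc N ≃ₗᵢ[ℝ] Euc N) (v : Euc N) : f⁻¹ v = f.symm v := rfl

lemma lie_one_apply (v : Euc N) : (1 : Euc N ≃ₗᵢ[ℝ] Euc N) v = v := rfl

lemma sigma_mem {R : Finset (Euc N)} {α : Euc N} (hα : α ∈ R) :
    sigmaRefl α ∈ coxeterGroup R :=
  Subgroup.subset_closure ⟨α, hα, rfl⟩

lemma cox_maps {R : Finset (Euc N)} (hRR : ∀ α ∈ R, ∀ β ∈ R, sigmaRefl α β ∈ R) :
    ∀ σ ∈ coxeterGroup R, ∀ α ∈ R, σ α ∈ R := by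
  have main : ∀ σ ∈ coxeterGroup R, (∀ α ∈ R, σ α ∈ R) ∧ (∀ α ∈ R, σ⁻¹ α ∈ R) := by
    intro σ hσ
    induction hσ using Subgroup.closure_induction with
    | mem x hx =>
      obtain ⟨γ, hγ, rfl⟩ := hx
      refine ⟨fun α hα => hRR γ hγ α hα, fun α hα => ?_⟩
      show (sigmaRefl γ).symm α ∈ R
      rw [← lie_inv_apply, sigma_inv]
      exact hRR γ hγ α hα
    | one => exact ⟨fun α hα => hα, fun α hα => hα⟩
    | mul x y hx hy ihx ihy =>
      refine ⟨fun α hα => ?_, fun α hα => ?_⟩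
      · rw [lie_mul_apply]; exact ihx.1 _ (ihy.1 α hα)
      · rw [mul_inv_rev, lie_mul_apply]; exact ihy.2 _ (ihx.2 α hα)
    | inv x hx ih => exact ⟨ih.2, by simpa using ih.1⟩
  exact fun σ hσ => (main σ hσ).1

/-- product of reflections attached to a list of vectors -/
noncomputable def prodSigma {N : ℕ} (l : List (Euc N)) : Euc N ≃ₗᵢ[ℝ] Euc N :=
  (l.map sigmaRefl).prod

@[simp] lemma prodSigma_nil : prodSigma ([] : List (Euc N)) = 1 := rfl

@[simp] lemma prodSigma_cons (γ : Euc N) (l : List (Euc N)) :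
    prodSigma (γ :: l) = sigmaRefl γ * prodSigma l := by
  simp [prodSigma]

lemma prodSigma_concat (l : List (Euc N)) (a : Euc N) :
    prodSigma (l ++ [a]) = prodSigma l * sigmaRefl a := by
  simp [prodSigma]

lemma prodSigma_mem {R : Finset (Euc N)} {l : List (Euc N)} (hl : ∀ γ ∈ l, γ ∈ R) :
    prodSigma l ∈ coxeterGroup R := by
  induction l with
  | nil => exact one_mem _
  | cons γ l ih =>
    rw [prodSigma_cons]
    exact mul_mem (sigma_mem (hl γ (by simp)))
      (ih (fun γ' hγ' => hl γ' (by simp [hγ'])))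

end Grp


section Generic
variable {N : ℕ}

lemma zero_of_mul_signs {p q r : ℝ} (h1 : 0 ≤ p*q) (h2 : 0 ≤ p*r) (h3 : q*r < 0) :
    p = 0 := by
  by_contra hp
  have hp2 : 0 < p^2 := by positivity
  nlinarith

lemma exists_generic (S : Finset (Euc N)) (hS : (0 : Euc N) ∉ S) :
    ∃ g : Euc N, ∀ α ∈ S, ⟪g, α⟫ ≠ 0 := by
  classical
  induction S using Finset.induction_on with
  | empty => exact ⟨0, fun α hα => absurd hα (by simp)⟩
  | @insert α S hα ih =>
    obtain ⟨g₀, hg₀⟩ := ih (fun h => hS (Finset.mem_insert_of_mem h))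
    have hα0 : α ≠ 0 := fun h => hS (h ▸ Finset.mem_insert_self α S)
    set bad : Finset ℝ := insert (0:ℝ) ((insert α S).image (fun β => -⟪g₀,β⟫ / ⟪α,β⟫)) with hbad
    obtain ⟨t, ht⟩ := Infinite.exists_notMem_finset bad
    have ht0 : t ≠ 0 := fun h => ht (by simp [hbad, h])
    refine ⟨g₀ + t • α, fun β hβ => ?_⟩
    have hinner : ⟪g₀ + t • α, β⟫ = ⟪g₀,β⟫ + t * ⟪α,β⟫ := by
      rw [inner_add_left, real_inner_smul_left]
    rw [hinner]
    by_cases hab : ⟪α,β⟫ = 0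
    · rcases Finset.mem_insert.1 hβ with rfl | hβS
      · exact absurd hab (inner_self_ne_zero.2 hα0)
      · simpa [hab] using hg₀ β hβS
    · intro hcontra
      apply ht
      have htval : t = -⟪g₀,β⟫ / ⟪α,β⟫ := by
        rw [eq_div_iff hab]
        linarith
      rw [hbad]
      exact Finset.mem_insert_of_mem (Finset.mem_image.2 ⟨β, hβ, htval.symm⟩)

lemma exists_delta (S : Finset (Euc N)) (s g : Euc N) :
    ∃ δ : ℝ, 0 < δ ∧ ∀ α ∈ S, ⟪s,α⟫ ≠ 0 → δ * |⟪g,α⟫| < |⟪s,α⟫| := by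
  classical
  induction S using Finset.induction_on with
  | empty => exact ⟨1, one_pos, by simp⟩
  | @insert α S hα ih =>
    obtain ⟨δ₀, hδ₀, h0⟩ := ih
    by_cases hs : ⟪s,α⟫ = 0
    · refine ⟨δ₀, hδ₀, fun β hβ hsβ => ?_⟩
      rcases Finset.mem_insert.1 hβ with rfl | hβS
      · exact absurd hs hsβ
      · exact h0 β hβS hsβ
    · refine ⟨min δ₀ (|⟪s,α⟫| / (|⟪g,α⟫| + 1)), lt_min hδ₀ (by positivity), ?_⟩
      intro β hβ hsβ
      rcases Finset.mem_insert.1 hβ with rfl | hβS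
      · calc min δ₀ (|⟪s,β⟫| / (|⟪g,β⟫| + 1)) * |⟪g,β⟫|
            ≤ (|⟪s,β⟫| / (|⟪g,β⟫| + 1)) * |⟪g,β⟫| :=
              mul_le_mul_of_nonneg_right (min_le_right _ _) (abs_nonneg _)
          _ < |⟪s,β⟫| := by
              rw [div_mul_eq_mul_div, div_lt_iff₀ (by positivity)]
              have h1 : 0 < |⟪s,β⟫| := abs_pos.2 hsβ
              have h2 : 0 ≤ |⟪g,β⟫| := abs_nonneg _
              nlinarith
      · exact lt_of_le_of_lt
          (mul_le_mul_of_nonneg_right (min_le_left _ _) (abs_nonneg _)) (h0 β hβS hsβ)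

end Generic


section PosSys
open scoped Classical
variable {N : ℕ}

/-- positive roots w.r.t. a generic functional `e` -/
noncomputable def Rpos (R : Finset (Euc N)) (e : Euc N) : Finset (Euc N) :=
  R.filter (fun α => 0 < ⟪e,α⟫)

/-- membership in the convex cone generated by a finite set -/
def inCone (T : Finset (Euc N)) (v : Euc N) : Prop :=
  ∃ c : Euc N → ℝ, (∀ γ ∈ T, 0 ≤ c γ) ∧ v = ∑ γ ∈ T, c γ • γ

lemma root_inner_self {R : Finset (Euc N)} (hR : IsNormalizedRootSystem R)
    {α : Euc N} (hα : α ∈ R) : ⟪α,α⟫ = 2 := by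
  rw [real_inner_self_eq_norm_sq, hR.norm_eq α hα, Real.sq_sqrt (by norm_num)]

lemma root_ne_zero {R : Finset (Euc N)} (hR : IsNormalizedRootSystem R)
    {α : Euc N} (hα : α ∈ R) : α ≠ 0 := fun h => hR.ne_zero (h ▸ hα)

lemma sigma_apply_self {R : Finset (Euc N)} (hR : IsNormalizedRootSystem R)
    {α : Euc N} (hα : α ∈ R) : sigmaRefl α α = -α := by
  rw [sigma_apply (root_inner_self hR hα), root_inner_self hR hα]
  module

lemma mem_Rpos {R : Finset (Euc N)} {e α : Euc N} :
    α ∈ Rpos R e ↔ α ∈ R ∧ 0 < ⟪e,α⟫ := Finset.mem_filter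

lemma pos_or_neg {R : Finset (Euc N)} (hR : IsNormalizedRootSystem R) {e : Euc N}
    (he : ∀ α ∈ R, ⟪e, α⟫ ≠ 0) {α : Euc N} (hα : α ∈ R) :
    α ∈ Rpos R e ∨ -α ∈ Rpos R e := by
  rcases lt_or_gt_of_ne (he α hα) with h | h
  · right
    exact mem_Rpos.2 ⟨hR.neg_mem α hα, by rw [inner_neg_right]; linarith⟩
  · left
    exact mem_Rpos.2 ⟨hα, h⟩

lemma neg_not_pos {R : Finset (Euc N)} {e α : Euc N} (hα : α ∈ Rpos R e) :
    -α ∉ Rpos R e := by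
  intro h
  have h1 := (mem_Rpos.1 hα).2
  have h2 := (mem_Rpos.1 h).2
  rw [inner_neg_right] at h2
  linarith

lemma inCone_self {T : Finset (Euc N)} {β : Euc N} (hβ : β ∈ T) : inCone T β := by
  classical
  refine ⟨fun γ => if γ = β then 1 else 0, fun γ _ => by positivity, ?_⟩
  rw [Finset.sum_congr rfl (fun γ _ => show (if γ = β then (1:ℝ) else 0) • γ
    = if γ = β then β else 0 by split_ifs with h <;> simp [h])]
  simp [Finset.sum_ite_eq' T β, hβ]

lemma inCone_subst {T : Finset (Euc N)} {β v : Euc N} (hv : inCone T v) (hβ : β ∈ T)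
    (hrep : inCone (T.erase β) β) : inCone (T.erase β) v := by
  classical
  obtain ⟨c, hc, hcs⟩ := hv
  obtain ⟨d, hd, hds⟩ := hrep
  refine ⟨fun γ => c γ + c β * d γ, fun γ hγ => add_nonneg (hc γ (Finset.mem_of_mem_erase hγ))
    (mul_nonneg (hc β hβ) (hd γ hγ)), ?_⟩
  have hsplit : v = c β • β + ∑ γ ∈ T.erase β, c γ • γ := by
    rw [hcs, ← Finset.add_sum_erase _ _ hβ]
  rw [hsplit]
  nth_rewrite 2 [hds]
  rw [Finset.smul_sum, ← Finset.sum_add_distrib]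
  refine Finset.sum_congr rfl (fun γ hγ => ?_)
  module

lemma exists_simpleSet (R : Finset (Euc N)) (e : Euc N) :
    ∃ T : Finset (Euc N), T ⊆ Rpos R e ∧ (∀ β ∈ Rpos R e, inCone T β) ∧
      ∀ T' : Finset (Euc N), T' ⊆ Rpos R e → (∀ β ∈ Rpos R e, inCone T' β) →
        T.card ≤ T'.card := by
  classical
  have hex : ∃ n : ℕ, ∃ T : Finset (Euc N), (T ⊆ Rpos R e ∧ ∀ β ∈ Rpos R e, inCone T β)
      ∧ T.card = n :=
    ⟨(Rpos R e).card, Rpos R e, ⟨Finset.Subset.refl _, fun β hβ => inCone_self hβ⟩, rfl⟩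
  obtain ⟨T, ⟨hT1, hT2⟩, hTcard⟩ := Nat.find_spec hex
  refine ⟨T, hT1, hT2, fun T' h1 h2 => ?_⟩
  rw [hTcard]
  exact Nat.find_le ⟨T', ⟨h1, h2⟩, rfl⟩

end PosSys


section PosSys2
open scoped Classical
variable {N : ℕ}

lemma sum_ite_smul (T : Finset (Euc N)) {α : Euc N} (hα : α ∈ T) (t : ℝ) :
    ∑ γ ∈ T, (if γ = α then t else 0) • γ = t • α := by
  rw [Finset.sum_congr rfl (fun γ _ => show (if γ = α then t else 0) • γ
    = if γ = α then t • α else 0 by split_ifs with h <;> simp [h])]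
  simp [Finset.sum_ite_eq' T α, hα]

lemma cone_extract_contra {R : Finset (Euc N)} {e : Euc N} {T : Finset (Euc N)}
    (hT : T ⊆ Rpos R e)
    (hgen : ∀ β ∈ Rpos R e, inCone T β)
    (hmin : ∀ T' : Finset (Euc N), T' ⊆ Rpos R e → (∀ β ∈ Rpos R e, inCone T' β) →
      T.card ≤ T'.card)
    {p q : Euc N} (hp : p ∈ T) (hq : q ∈ T) (hpq : q ≠ p) {s r : ℝ}
    (hs : 0 < s) (hr : 0 < r) {c : Euc N → ℝ} (hc : ∀ γ ∈ T, 0 ≤ c γ)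
    (key : s • p = r • q + ∑ γ ∈ T, c γ • γ) : False := by
  have hepos : ∀ γ ∈ T, 0 < ⟪e,γ⟫ := fun γ hγ => (mem_Rpos.1 (hT hγ)).2
  by_cases hcp : c p < s
  · -- p is in the cone of T.erase p : contradicts minimality
    have hspos : 0 < s - c p := by linarith
    have hkey3 : (s - c p) • p = r • q + ∑ γ ∈ T.erase p, c γ • γ := by
      have h1 : s • p = r • q + (c p • p + ∑ γ ∈ T.erase p, c γ • γ) := by
        rw [key, Finset.add_sum_erase _ (fun γ => c γ • γ) hp]
      rw [sub_smul, h1]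
      abel
    have hq' : q ∈ T.erase p := Finset.mem_erase.2 ⟨hpq, hq⟩
    have hrep : inCone (T.erase p) p := by
      refine ⟨fun γ => (s - c p)⁻¹ * (c γ + if γ = q then r else 0), fun γ hγ =>
        mul_nonneg (by positivity) (add_nonneg (hc γ (Finset.mem_of_mem_erase hγ))
          (by positivity)), ?_⟩
      calc p = (s - c p)⁻¹ • ((s - c p) • p) := by
              rw [smul_smul, inv_mul_cancel₀ hspos.ne', one_smul]
        _ = (s - c p)⁻¹ • (r • q + ∑ γ ∈ T.erase p, c γ • γ) := by rw [hkey3]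
        _ = ∑ γ ∈ T.erase p, ((s - c p)⁻¹ * (c γ + if γ = q then r else 0)) • γ := by
            rw [Finset.sum_congr rfl (fun γ _ => show
              ((s - c p)⁻¹ * (c γ + if γ = q then r else 0)) • γ
                = (s - c p)⁻¹ • (c γ • γ) + (if γ = q then (s - c p)⁻¹ * r else 0) • γ by
              split_ifs <;> module)]
            rw [Finset.sum_add_distrib, sum_ite_smul _ hq' ((s - c p)⁻¹ * r),
              ← Finset.smul_sum, smul_add, smul_smul]
            abel
    have hsub : T.erase p ⊆ Rpos R e := fun γ hγ => hT (Finset.mem_of_mem_erase hγ)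
    have hgen' : ∀ β ∈ Rpos R e, inCone (T.erase p) β :=
      fun β hβ => inCone_subst (hgen β hβ) hp hrep
    exact absurd (hmin _ hsub hgen') (not_le.2 (Finset.card_erase_lt_of_mem hp))
  · push_neg at hcp
    have he' : s * ⟪e,p⟫ = r * ⟪e,q⟫ + ∑ γ ∈ T, c γ * ⟪e,γ⟫ := by
      have h0 := congrArg (fun v : Euc N => ⟪e,v⟫) key
      simpa only [inner_add_right, real_inner_smul_right, inner_sum] using h0
    have hsum_ge : c p * ⟪e,p⟫ ≤ ∑ γ ∈ T, c γ * ⟪e,γ⟫ := by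
      rw [← Finset.add_sum_erase _ (fun γ => c γ * ⟪e,γ⟫) hp]
      have h2 : 0 ≤ ∑ γ ∈ T.erase p, c γ * ⟪e,γ⟫ :=
        Finset.sum_nonneg (fun γ hγ => mul_nonneg (hc γ (Finset.mem_of_mem_erase hγ))
          (le_of_lt (hepos γ (Finset.mem_of_mem_erase hγ))))
      linarith
    have hep : 0 < ⟪e,p⟫ := hepos p hp
    have heq : 0 < ⟪e,q⟫ := hepos q hq
    nlinarith [mul_le_mul_of_nonneg_right hcp hep.le, mul_pos hr heq]

lemma simple_obtuse {R : Finset (Euc N)} (hR : IsNormalizedRootSystem R) {e : Euc N}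
    (he : ∀ α ∈ R, ⟪e, α⟫ ≠ 0) {T : Finset (Euc N)} (hT : T ⊆ Rpos R e)
    (hgen : ∀ β ∈ Rpos R e, inCone T β)
    (hmin : ∀ T' : Finset (Euc N), T' ⊆ Rpos R e → (∀ β ∈ Rpos R e, inCone T' β) →
      T.card ≤ T'.card)
    {α β : Euc N} (hα : α ∈ T) (hβ : β ∈ T) (hne : β ≠ α) : ⟪β,α⟫ ≤ 0 := by
  by_contra hpos
  push_neg at hpos
  set t := ⟪β,α⟫ with ht
  have hαR : α ∈ R := (mem_Rpos.1 (hT hα)).1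
  have hβR : β ∈ R := (mem_Rpos.1 (hT hβ)).1
  have hξR : sigmaRefl α β ∈ R := hR.refl_mem α hαR β hβR
  have hξ : sigmaRefl α β = β - t • α := by
    rw [sigma_apply (root_inner_self hR hαR), real_inner_comm]
  rcases pos_or_neg hR he hξR with hp | hp
  · obtain ⟨c, hc, hcs⟩ := hgen _ hp
    have key : (1:ℝ) • β = t • α + ∑ γ ∈ T, c γ • γ := by
      rw [one_smul, ← hcs, hξ]
      abel
    exact cone_extract_contra hT hgen hmin hβ hα (fun h => hne h.symm) one_pos hpos hc key
  · obtain ⟨c, hc, hcs⟩ := hgen _ hp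
    have key : t • α = (1:ℝ) • β + ∑ γ ∈ T, c γ • γ := by
      rw [one_smul, ← hcs, hξ]
      abel
    exact cone_extract_contra hT hgen hmin hα hβ hne hpos one_pos hc key

end PosSys2


section PosSys3
open scoped Classical
variable {N : ℕ}

lemma obtuse_indep {e : Euc N} {T : Finset (Euc N)} (hTpos : ∀ γ ∈ T, 0 < ⟪e,γ⟫)
    (hobt : ∀ α ∈ T, ∀ β ∈ T, β ≠ α → ⟪β,α⟫ ≤ 0) {f : Euc N → ℝ}
    (hsum : ∑ γ ∈ T, f γ • γ = 0) : ∀ γ ∈ T, f γ = 0 := by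
  set P := T.filter (fun γ => 0 ≤ f γ) with hP
  set Q := T.filter (fun γ => ¬ 0 ≤ f γ) with hQ
  have hsplit : ∑ γ ∈ P, f γ • γ + ∑ γ ∈ Q, f γ • γ = 0 := by
    rw [hP, hQ, Finset.sum_filter_add_sum_filter_not T (fun γ => 0 ≤ f γ)
      (fun γ => f γ • γ)]
    exact hsum
  set u : Euc N := ∑ γ ∈ P, f γ • γ with hu
  have huQ : u = ∑ γ ∈ Q, (-(f γ)) • γ := by
    have : u = -∑ γ ∈ Q, f γ • γ := by rw [hu, eq_neg_iff_add_eq_zero]; exact hsplit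
    rw [this, ← Finset.sum_neg_distrib]
    exact Finset.sum_congr rfl (fun γ _ => by module)
  have hu0 : u = 0 := by
    rw [← real_inner_self_nonpos]
    calc ⟪u,u⟫ = ∑ γ ∈ P, ∑ δ ∈ Q, (f γ * -(f δ)) * ⟪γ,δ⟫ := by
          nth_rewrite 2 [huQ]
          nth_rewrite 1 [hu]
          rw [sum_inner]
          refine Finset.sum_congr rfl (fun γ _ => ?_)
          rw [real_inner_smul_left, inner_sum, Finset.mul_sum]
          refine Finset.sum_congr rfl (fun δ _ => ?_)
          rw [real_inner_smul_right]
          ring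
      _ ≤ 0 := by
          apply Finset.sum_nonpos
          intro γ hγ
          apply Finset.sum_nonpos
          intro δ hδ
          have hγT : γ ∈ T := Finset.mem_of_mem_filter _ hγ
          have hδT : δ ∈ T := Finset.mem_of_mem_filter _ hδ
          have hfγ : 0 ≤ f γ := (Finset.mem_filter.1 hγ).2
          have hfδ : f δ < 0 := not_le.1 (Finset.mem_filter.1 hδ).2
          have hne : γ ≠ δ := fun h => absurd (h ▸ hfγ) (not_le.2 hfδ)
          have hip : ⟪γ,δ⟫ ≤ 0 := hobt δ hδT γ hγT hne
          have h1 : 0 ≤ f γ * -(f δ) := mul_nonneg hfγ (by linarith)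
          exact mul_nonpos_of_nonneg_of_nonpos h1 hip
  have hPzero : ∀ γ ∈ P, f γ = 0 := by
    have h0 : ∑ γ ∈ P, f γ * ⟪e,γ⟫ = 0 := by
      have := congrArg (fun v : Euc N => ⟪e,v⟫) hu0
      simpa only [hu, inner_sum, real_inner_smul_right, inner_zero_right] using this
    intro γ hγ
    have hγT : γ ∈ T := Finset.mem_of_mem_filter _ hγ
    have heach := (Finset.sum_eq_zero_iff_of_nonneg (fun δ hδ =>
      mul_nonneg ((Finset.mem_filter.1 hδ).2) (hTpos δ (Finset.mem_of_mem_filter _ hδ)).le)).1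
      h0 γ hγ
    have := hTpos γ hγT
    rcases mul_eq_zero.1 heach with h | h
    · exact h
    · linarith
  have hQzero : ∀ γ ∈ Q, False := by
    have h0 : ∑ γ ∈ Q, (-(f γ)) * ⟪e,γ⟫ = 0 := by
      have := congrArg (fun v : Euc N => ⟪e,v⟫) (huQ ▸ hu0)
      simpa only [inner_sum, real_inner_smul_right, inner_zero_right] using this
    intro γ hγ
    have hγT : γ ∈ T := Finset.mem_of_mem_filter _ hγ
    have hfγ : f γ < 0 := not_le.1 (Finset.mem_filter.1 hγ).2
    have heach := (Finset.sum_eq_zero_iff_of_nonneg (fun δ hδ =>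
      mul_nonneg (by have := not_le.1 (Finset.mem_filter.1 hδ).2; linarith)
        (hTpos δ (Finset.mem_of_mem_filter _ hδ)).le)).1 h0 γ hγ
    have := hTpos γ hγT
    rcases mul_eq_zero.1 heach with h | h
    · linarith
    · linarith
  intro γ hγ
  by_cases h : 0 ≤ f γ
  · exact hPzero γ (Finset.mem_filter.2 ⟨hγ, h⟩)
  · exact absurd (Finset.mem_filter.2 ⟨hγ, h⟩) (fun hh => hQzero γ hh)

lemma simple_perm {R : Finset (Euc N)} (hR : IsNormalizedRootSystem R) {e : Euc N}
    (he : ∀ α ∈ R, ⟪e, α⟫ ≠ 0) {T : Finset (Euc N)} (hT : T ⊆ Rpos R e)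
    (hgen : ∀ β ∈ Rpos R e, inCone T β)
    (hmin : ∀ T' : Finset (Euc N), T' ⊆ Rpos R e → (∀ β ∈ Rpos R e, inCone T' β) →
      T.card ≤ T'.card)
    {α β : Euc N} (hα : α ∈ T) (hβ : β ∈ Rpos R e) (hne : β ≠ α) :
    sigmaRefl α β ∈ Rpos R e ∧ sigmaRefl α β ≠ α := by
  have hαR : α ∈ R := (mem_Rpos.1 (hT hα)).1
  have hβR : β ∈ R := (mem_Rpos.1 hβ).1
  have hαe : 0 < ⟪e,α⟫ := (mem_Rpos.1 (hT hα)).2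
  have hβe : 0 < ⟪e,β⟫ := (mem_Rpos.1 hβ).2
  have hξR : sigmaRefl α β ∈ R := hR.refl_mem α hαR β hβR
  set t := ⟪α,β⟫ with htdef
  have hξ : sigmaRefl α β = β - t • α := sigma_apply (root_inner_self hR hαR) β
  have hTpos : ∀ γ ∈ T, 0 < ⟪e,γ⟫ := fun γ hγ => (mem_Rpos.1 (hT hγ)).2
  have hobt : ∀ δ ∈ T, ∀ γ ∈ T, γ ≠ δ → ⟪γ,δ⟫ ≤ 0 :=
    fun δ hδ γ hγ hγδ => simple_obtuse hR he hT hgen hmin hδ hγ hγδ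
  have hmem : sigmaRefl α β ∈ Rpos R e := by
    rcases pos_or_neg hR he hξR with hp | hp
    · exact hp
    · exfalso
      obtain ⟨c, hc, hcs⟩ := hgen β hβ
      obtain ⟨d, hd, hds⟩ := hgen _ hp
      have hzero : ∑ γ ∈ T, (c γ + d γ - if γ = α then t else 0) • γ = 0 := by
        rw [Finset.sum_congr rfl (fun γ (_ : γ ∈ T) => show
          (c γ + d γ - if γ = α then t else 0) • γ
            = c γ • γ + d γ • γ - (if γ = α then t else 0) • γ by module)]
        rw [Finset.sum_sub_distrib, Finset.sum_add_distrib, sum_ite_smul _ hα t,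
          ← hcs, ← hds, hξ]
        abel
      have hall := obtuse_indep hTpos hobt hzero
      have hβeq : β = c α • α := by
        rw [hcs, ← Finset.add_sum_erase _ _ hα]
        have hz : ∑ γ ∈ T.erase α, c γ • γ = 0 := by
          refine Finset.sum_eq_zero (fun γ hγ => ?_)
          have hγT := Finset.mem_of_mem_erase hγ
          have hγα := (Finset.mem_erase.1 hγ).1
          have h0 := hall γ hγT
          rw [if_neg hγα] at h0
          have hc0 := hc γ hγT
          have hd0 := hd γ hγT
          have : c γ = 0 := by linarith
          rw [this, zero_smul]
        rw [hz, add_zero]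
      rcases hR.smul_mem α hαR (c α) (hβeq ▸ hβR) with h | h
      · exact hne (hβeq.trans h)
      · have hβnα : β = -α := hβeq.trans h
        rw [hβnα, inner_neg_right] at hβe
        linarith
  refine ⟨hmem, fun h => ?_⟩
  have hβα : β = sigmaRefl α α := by rw [← sigma_invol α β, h]
  rw [sigma_apply_self hR hαR] at hβα
  rw [hβα, inner_neg_right] at hβe
  linarith

end PosSys3


section PosSys4
open scoped Classical
variable {N : ℕ}

lemma rho_simple_inner {R : Finset (Euc N)} (hR : IsNormalizedRootSystem R) {e : Euc N}
    (he : ∀ α ∈ R, ⟪e, α⟫ ≠ 0) {T : Finset (Euc N)} (hT : T ⊆ Rpos R e)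
    (hgen : ∀ β ∈ Rpos R e, inCone T β)
    (hmin : ∀ T' : Finset (Euc N), T' ⊆ Rpos R e → (∀ β ∈ Rpos R e, inCone T' β) →
      T.card ≤ T'.card)
    {α : Euc N} (hα : α ∈ T) : ⟪α, ∑ β ∈ Rpos R e, β⟫ = 2 := by
  set ρ := ∑ β ∈ Rpos R e, β with hρ
  have hαR : α ∈ R := (mem_Rpos.1 (hT hα)).1
  have hαpos : α ∈ Rpos R e := hT hα
  have hmap : sigmaRefl α ρ = ∑ β ∈ Rpos R e, sigmaRefl α β := map_sum _ _ _
  have hsplit : ∑ β ∈ Rpos R e, sigmaRefl α β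
      = sigmaRefl α α + ∑ β ∈ (Rpos R e).erase α, sigmaRefl α β :=
    (Finset.add_sum_erase _ (fun β => sigmaRefl α β) hαpos).symm
  have hre : ∑ β ∈ (Rpos R e).erase α, sigmaRefl α β = ∑ β ∈ (Rpos R e).erase α, β := by
    refine Finset.sum_nbij' (fun β => sigmaRefl α β) (fun β => sigmaRefl α β) ?_ ?_ ?_ ?_ ?_
    · intro β hβ
      have h1 := (Finset.mem_erase.1 hβ)
      have h2 := simple_perm hR he hT hgen hmin hα h1.2 h1.1
      exact Finset.mem_erase.2 ⟨h2.2, h2.1⟩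
    · intro β hβ
      have h1 := (Finset.mem_erase.1 hβ)
      have h2 := simple_perm hR he hT hgen hmin hα h1.2 h1.1
      exact Finset.mem_erase.2 ⟨h2.2, h2.1⟩
    · intro β _; exact sigma_invol α β
    · intro β _; exact sigma_invol α β
    · intro β _; rfl
  have hρerase : ∑ β ∈ (Rpos R e).erase α, β = ρ - α := by
    rw [hρ, ← Finset.add_sum_erase _ (fun β => β) hαpos]
    abel
  have hform : sigmaRefl α ρ = ρ - ⟪α,ρ⟫ • α := sigma_apply (root_inner_self hR hαR) ρ
  have hfinal : ρ - ⟪α,ρ⟫ • α = ρ - (2:ℝ) • α := by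
    rw [← hform, hmap, hsplit, hre, hρerase, sigma_apply_self hR hαR]
    rw [two_smul]
    abel
  have h2 : ⟪α,ρ⟫ • α = (2:ℝ) • α := sub_right_inj.1 hfinal
  have h3 : (⟪α,ρ⟫ - 2) • α = 0 := by rw [sub_smul, h2]; abel
  rcases smul_eq_zero.1 h3 with h | h
  · linarith [sub_eq_zero.1 (by linarith [h] : ⟪α,ρ⟫ - 2 = 0)]
  · exact absurd h (root_ne_zero hR hαR)

lemma rho_pos_inner {R : Finset (Euc N)} (hR : IsNormalizedRootSystem R) {e : Euc N}
    (he : ∀ α ∈ R, ⟪e, α⟫ ≠ 0) {T : Finset (Euc N)} (hT : T ⊆ Rpos R e)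
    (hgen : ∀ β ∈ Rpos R e, inCone T β)
    (hmin : ∀ T' : Finset (Euc N), T' ⊆ Rpos R e → (∀ β ∈ Rpos R e, inCone T' β) →
      T.card ≤ T'.card)
    {β : Euc N} (hβ : β ∈ Rpos R e) : 0 < ⟪β, ∑ δ ∈ Rpos R e, δ⟫ := by
  set ρ := ∑ δ ∈ Rpos R e, δ with hρ
  obtain ⟨c, hc, hcs⟩ := hgen β hβ
  have hβR : β ∈ R := (mem_Rpos.1 hβ).1
  have hexp : ⟪β,ρ⟫ = ∑ γ ∈ T, c γ * 2 := by
    conv_lhs => rw [hcs]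
    rw [sum_inner]
    exact Finset.sum_congr rfl (fun γ hγ => by
      rw [real_inner_smul_left, rho_simple_inner hR he hT hgen hmin hγ])
  rcases lt_or_eq_of_le (Finset.sum_nonneg (fun γ hγ =>
    mul_nonneg (hc γ hγ) (by norm_num)) : (0:ℝ) ≤ ∑ γ ∈ T, c γ * 2) with h | h
  · rw [hexp]; exact h
  · exfalso
    have hczero : ∀ γ ∈ T, c γ = 0 := by
      intro γ hγ
      have := (Finset.sum_eq_zero_iff_of_nonneg (fun δ hδ =>
        mul_nonneg (hc δ hδ) (by norm_num))).1 h.symm γ hγ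
      linarith
    have : β = 0 := by
      rw [hcs]
      exact Finset.sum_eq_zero (fun γ hγ => by rw [hczero γ hγ, zero_smul])
    exact root_ne_zero hR hβR this

lemma gen_simple {R : Finset (Euc N)} (hR : IsNormalizedRootSystem R) {e : Euc N}
    (he : ∀ α ∈ R, ⟪e, α⟫ ≠ 0) {T : Finset (Euc N)} (hT : T ⊆ Rpos R e)
    (hgen : ∀ β ∈ Rpos R e, inCone T β)
    (hmin : ∀ T' : Finset (Euc N), T' ⊆ Rpos R e → (∀ β ∈ Rpos R e, inCone T' β) →
      T.card ≤ T'.card) :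
    ∀ β ∈ Rpos R e,
      sigmaRefl β ∈ Subgroup.closure ((fun γ => sigmaRefl γ) '' (T : Set (Euc N))) := by
  set H := Subgroup.closure ((fun γ => sigmaRefl γ) '' (T : Set (Euc N))) with hH
  set ρ := ∑ δ ∈ Rpos R e, δ with hρ
  set m : Euc N → ℕ := fun β => ((Rpos R e).filter (fun γ => ⟪γ,ρ⟫ < ⟪β,ρ⟫)).card with hm
  suffices hsuf : ∀ k, ∀ β ∈ Rpos R e, m β < k → sigmaRefl β ∈ H by
    exact fun β hβ => hsuf (m β + 1) β hβ (Nat.lt_succ_self _)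
  intro k
  induction k with
  | zero => omega
  | succ k ih =>
    intro β hβ hk
    have hβR : β ∈ R := (mem_Rpos.1 hβ).1
    obtain ⟨c, hc, hcs⟩ := hgen β hβ
    have h2 : 0 < ∑ γ ∈ T, c γ * ⟪γ,β⟫ := by
      have hself : ⟪β,β⟫ = ∑ γ ∈ T, c γ * ⟪γ,β⟫ := by
        nth_rewrite 1 [hcs]
        rw [sum_inner]
        exact Finset.sum_congr rfl (fun γ hγ => real_inner_smul_left _ _ _)
      rw [← hself, root_inner_self hR hβR]
      norm_num
    have hex : ∃ γ ∈ T, 0 < c γ * ⟪γ,β⟫ := by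
      by_contra hco
      push_neg at hco
      linarith [Finset.sum_nonpos hco]
    obtain ⟨γ, hγT, hγpos⟩ := hex
    have hγR : γ ∈ R := (mem_Rpos.1 (hT hγT)).1
    have hip : 0 < ⟪γ,β⟫ := by nlinarith [hc γ hγT]
    by_cases hβγ : β = γ
    · exact Subgroup.subset_closure ⟨γ, hγT, by rw [hβγ]⟩
    · set β' := sigmaRefl γ β with hβ'def
      obtain ⟨hβ'pos, hβ'neγ⟩ := simple_perm hR he hT hgen hmin hγT hβ hβγ
      have hβ'eq : β' = β - ⟪γ,β⟫ • γ := sigma_apply (root_inner_self hR hγR) β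
      have hmeas : ⟪β',ρ⟫ = ⟪β,ρ⟫ - ⟪γ,β⟫ * 2 := by
        rw [hβ'eq, inner_sub_left, real_inner_smul_left,
          rho_simple_inner hR he hT hgen hmin hγT]
      have hlt : ⟪β',ρ⟫ < ⟪β,ρ⟫ := by rw [hmeas]; nlinarith
      have hmlt : m β' < m β := by
        apply Finset.card_lt_card
        rw [Finset.ssubset_iff_of_subset]
        · exact ⟨β', Finset.mem_filter.2 ⟨hβ'pos, hlt⟩, fun hmem =>
            absurd (Finset.mem_filter.1 hmem).2 (lt_irrefl _)⟩
        · intro ξ hξ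
          have h1 := Finset.mem_filter.1 hξ
          exact Finset.mem_filter.2 ⟨h1.1, by linarith [h1.2]⟩
      have hβ'H : sigmaRefl β' ∈ H := ih β' hβ'pos (by omega)
      have hββ' : β = sigmaRefl γ β' := (sigma_invol γ β).symm
      rw [show sigmaRefl β = sigmaRefl γ * sigmaRefl β' * (sigmaRefl γ)⁻¹ by
        rw [← sigma_conj, ← hββ']]
      exact mul_mem (mul_mem (Subgroup.subset_closure ⟨γ, hγT, rfl⟩) hβ'H)
        (inv_mem (Subgroup.subset_closure ⟨γ, hγT, rfl⟩))

lemma exists_word {R : Finset (Euc N)} (hR : IsNormalizedRootSystem R) {e : Euc N}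
    (he : ∀ α ∈ R, ⟪e, α⟫ ≠ 0) {T : Finset (Euc N)} (hT : T ⊆ Rpos R e)
    (hgen : ∀ β ∈ Rpos R e, inCone T β)
    (hmin : ∀ T' : Finset (Euc N), T' ⊆ Rpos R e → (∀ β ∈ Rpos R e, inCone T' β) →
      T.card ≤ T'.card)
    {w : Euc N ≃ₗᵢ[ℝ] Euc N} (hw : w ∈ coxeterGroup R) :
    ∃ l : List (Euc N), (∀ γ ∈ l, γ ∈ T) ∧ prodSigma l = w := by
  set S : Set (Euc N ≃ₗᵢ[ℝ] Euc N) := (fun γ => sigmaRefl γ) '' (T : Set (Euc N)) with hS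
  have hle : coxeterGroup R ≤ Subgroup.closure S := by
    rw [coxeterGroup]
    apply (Subgroup.closure_le _).2
    rintro x ⟨ξ, hξ, rfl⟩
    have hξR : ξ ∈ R := hξ
    rcases pos_or_neg hR he hξR with hp | hp
    · exact gen_simple hR he hT hgen hmin ξ hp
    · have := gen_simple hR he hT hgen hmin (-ξ) hp
      rwa [sigma_neg] at this
  have hw2 : w ∈ Submonoid.closure (S ∪ S⁻¹) := by
    rw [← Subgroup.closure_toSubmonoid]
    exact hle hw
  obtain ⟨l, hl, hprod⟩ := Submonoid.exists_list_of_mem_closure hw2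
  clear hw2 hw
  subst hprod
  induction l with
  | nil => exact ⟨[], by simp, rfl⟩
  | cons u l ihl =>
    obtain ⟨l', hl', hprod'⟩ := ihl (fun y hy => hl y (by simp [hy]))
    have hu : u ∈ S ∪ S⁻¹ := hl u (by simp)
    have huS : ∃ γ ∈ T, u = sigmaRefl γ := by
      rcases hu with h | h
      · obtain ⟨γ, hγ, rfl⟩ := h
        exact ⟨γ, hγ, rfl⟩
      · rw [Set.mem_inv] at h
        obtain ⟨γ, hγ, hγe⟩ := h
        exact ⟨γ, hγ, by rw [← inv_inv u, ← hγe, sigma_inv]⟩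
    obtain ⟨γ, hγT, rfl⟩ := huS
    exact ⟨γ :: l', fun δ hδ => by
      rcases List.mem_cons.1 hδ with rfl | hmem
      · exact hγT
      · exact hl' δ hmem, by rw [prodSigma_cons, hprod', List.prod_cons]⟩

end PosSys4


section SEFD
open scoped Classical
variable {N : ℕ}

lemma letters_in_R {R : Finset (Euc N)} {e : Euc N} {T : Finset (Euc N)}
    (hT : T ⊆ Rpos R e) {l : List (Euc N)} (hl : ∀ γ ∈ l, γ ∈ T) :
    ∀ γ ∈ l, γ ∈ R := fun γ hγ => (mem_Rpos.1 (hT (hl γ hγ))).1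

lemma strong_exchange {R : Finset (Euc N)} (hR : IsNormalizedRootSystem R) {e : Euc N}
    (he : ∀ α ∈ R, ⟪e, α⟫ ≠ 0) {T : Finset (Euc N)} (hT : T ⊆ Rpos R e)
    (hgen : ∀ β ∈ Rpos R e, inCone T β)
    (hmin : ∀ T' : Finset (Euc N), T' ⊆ Rpos R e → (∀ β ∈ Rpos R e, inCone T' β) →
      T.card ≤ T'.card) :
    ∀ (l : List (Euc N)), (∀ γ ∈ l, γ ∈ T) → ∀ a ∈ T,
      ⟪e, prodSigma l a⟫ < 0 →
      ∃ l' : List (Euc N), (∀ γ ∈ l', γ ∈ T) ∧ l'.length + 1 = l.length ∧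
        prodSigma l * sigmaRefl a = prodSigma l' := by
  intro l
  induction l with
  | nil =>
    intro _ a ha hneg
    exfalso
    rw [prodSigma_nil, lie_one_apply] at hneg
    linarith [(mem_Rpos.1 (hT ha)).2]
  | cons γ l₂ ih =>
    intro hl a ha hneg
    have hγT : γ ∈ T := hl γ (by simp)
    have hl₂ : ∀ δ' ∈ l₂, δ' ∈ T := fun δ' hδ' => hl δ' (by simp [hδ'])
    have haR : a ∈ R := (mem_Rpos.1 (hT ha)).1
    set δ := prodSigma l₂ a with hδdef
    have hδR : δ ∈ R :=
      cox_maps hR.refl_mem _ (prodSigma_mem (letters_in_R hT hl₂)) a haR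
    have hw : prodSigma (γ :: l₂) a = sigmaRefl γ δ := by
      rw [prodSigma_cons, lie_mul_apply]
    by_cases hδneg : ⟪e, δ⟫ < 0
    · obtain ⟨l₂', h1, h2, h3⟩ := ih hl₂ a ha hδneg
      refine ⟨γ :: l₂', fun ξ hξ => ?_, by simp [← h2], ?_⟩
      · rcases List.mem_cons.1 hξ with rfl | hmem
        · exact hγT
        · exact h1 ξ hmem
      · rw [prodSigma_cons, mul_assoc, h3, ← prodSigma_cons]
    · have hδpos : δ ∈ Rpos R e :=
        mem_Rpos.2 ⟨hδR, lt_of_le_of_ne (not_lt.1 hδneg) (Ne.symm (he δ hδR))⟩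
      have hδγ : δ = γ := by
        by_contra hne
        have hmem := (simple_perm hR he hT hgen hmin hγT hδpos hne).1
        have hpos2 := (mem_Rpos.1 hmem).2
        rw [hw] at hneg
        linarith
      have hconj : sigmaRefl γ = prodSigma l₂ * sigmaRefl a * (prodSigma l₂)⁻¹ := by
        rw [← hδγ, hδdef, sigma_conj]
      refine ⟨l₂, hl₂, by simp, ?_⟩
      rw [prodSigma_cons, hconj]
      rw [show prodSigma l₂ * sigmaRefl a * (prodSigma l₂)⁻¹ * prodSigma l₂ * sigmaRefl a
        = prodSigma l₂ * (sigmaRefl a * sigmaRefl a) by group, sigma_sq, mul_one]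

lemma fundamental_domain_aux {R : Finset (Euc N)} (hR : IsNormalizedRootSystem R) {e : Euc N}
    (he : ∀ α ∈ R, ⟪e, α⟫ ≠ 0) {T : Finset (Euc N)} (hT : T ⊆ Rpos R e)
    (hgen : ∀ β ∈ Rpos R e, inCone T β)
    (hmin : ∀ T' : Finset (Euc N), T' ⊆ Rpos R e → (∀ β ∈ Rpos R e, inCone T' β) →
      T.card ≤ T'.card)
    {y z : Euc N} (hy : ∀ β ∈ Rpos R e, 0 ≤ ⟪y,β⟫) (hz : ∀ β ∈ Rpos R e, 0 ≤ ⟪z,β⟫) :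
    ∀ k (l : List (Euc N)), l.length = k → (∀ γ ∈ l, γ ∈ T) → prodSigma l y = z →
      y = z := by
  intro k
  induction k using Nat.strong_induction_on with
  | _ k ihk =>
    intro l hlen hlT hmap
    by_cases hnil : l = []
    · rw [hnil, prodSigma_nil, lie_one_apply] at hmap
      exact hmap
    · by_cases hcase : ∃ a ∈ T, ⟪e, prodSigma l a⟫ < 0
      · obtain ⟨a, haT, haneg⟩ := hcase
        have haR : a ∈ R := (mem_Rpos.1 (hT haT)).1
        have hwaR : prodSigma l a ∈ R :=
          cox_maps hR.refl_mem _ (prodSigma_mem (letters_in_R hT hlT)) a haR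
        have hya : ⟪y,a⟫ = 0 := by
          have h1 : 0 ≤ ⟪y,a⟫ := hy a (hT haT)
          have h2 : ⟪z, prodSigma l a⟫ = ⟪y, a⟫ := by
            rw [← hmap, LinearIsometryEquiv.inner_map_map]
          have hnwa : -(prodSigma l a) ∈ Rpos R e :=
            mem_Rpos.2 ⟨hR.neg_mem _ hwaR, by rw [inner_neg_right]; linarith⟩
          have h3 : 0 ≤ ⟪z, -(prodSigma l a)⟫ := hz _ hnwa
          rw [inner_neg_right] at h3
          linarith
        have hfix : sigmaRefl a y = y := by
          rw [sigma_apply (root_inner_self hR haR), real_inner_comm, hya, zero_smul,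
            sub_zero]
        obtain ⟨l', hl'T, hl'len, hl'prod⟩ :=
          strong_exchange hR he hT hgen hmin l hlT a haT haneg
        refine ihk l'.length (by omega) l' rfl hl'T ?_
        have : prodSigma l' y = (prodSigma l * sigmaRefl a) y := by rw [hl'prod]
        rw [this, lie_mul_apply, hfix, hmap]
      · push_neg at hcase
        obtain ⟨l₁, a, rfl⟩ : ∃ l₁ a, l = l₁ ++ [a] := by
          rcases List.eq_nil_or_concat l with h | ⟨L, b, h⟩
          · exact absurd h hnil
          · exact ⟨L, b, by rw [h, List.concat_eq_append]⟩
        have haT : a ∈ T := hlT a (by simp)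
        have haR : a ∈ R := (mem_Rpos.1 (hT haT)).1
        have hl₁T : ∀ γ ∈ l₁, γ ∈ T := fun γ hγ => hlT γ (by simp [hγ])
        have hwsplit : prodSigma (l₁ ++ [a]) = prodSigma l₁ * sigmaRefl a :=
          prodSigma_concat l₁ a
        have hua : prodSigma l₁ a = -(prodSigma (l₁ ++ [a]) a) := by
          rw [hwsplit, lie_mul_apply, sigma_apply_self hR haR, map_neg, neg_neg]
        have hwaR : prodSigma (l₁ ++ [a]) a ∈ R :=
          cox_maps hR.refl_mem _ (prodSigma_mem (letters_in_R hT hlT)) a haR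
        have hwapos : 0 < ⟪e, prodSigma (l₁ ++ [a]) a⟫ :=
          lt_of_le_of_ne (hcase a haT) (Ne.symm (he _ hwaR))
        have huaneg : ⟪e, prodSigma l₁ a⟫ < 0 := by
          rw [hua, inner_neg_right]
          linarith
        obtain ⟨l'', hl''T, hl''len, hl''prod⟩ :=
          strong_exchange hR he hT hgen hmin l₁ hl₁T a haT huaneg
        refine ihk l''.length ?_ l'' rfl hl''T ?_
        · have : (l₁ ++ [a]).length = l₁.length + 1 := by simp
          omega
        · rw [← hl''prod, ← hwsplit, hmap]

lemma fundamental_domain {R : Finset (Euc N)} (hR : IsNormalizedRootSystem R) {e : Euc N}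
    (he : ∀ α ∈ R, ⟪e, α⟫ ≠ 0) {y z : Euc N}
    (hy : ∀ β ∈ Rpos R e, 0 ≤ ⟪y,β⟫) (hz : ∀ β ∈ Rpos R e, 0 ≤ ⟪z,β⟫)
    {w : Euc N ≃ₗᵢ[ℝ] Euc N} (hw : w ∈ coxeterGroup R) (hwy : w y = z) : y = z := by
  obtain ⟨T, hT, hgen, hmin⟩ := exists_simpleSet R e
  obtain ⟨l, hlT, hlprod⟩ := exists_word hR he hT hgen hmin hw
  exact fundamental_domain_aux hR he hT hgen hmin hy hz l.length l rfl hlT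
    (by rw [hlprod, hwy])

end SEFD


section Final
open scoped Classical
variable {N : ℕ}

lemma same_side_eq {R : Finset (Euc N)} (hR : IsNormalizedRootSystem R)
    {y z : Euc N} (hsep : ∀ α ∈ R, 0 ≤ ⟪y,α⟫ * ⟪z,α⟫)
    {w : Euc N ≃ₗᵢ[ℝ] Euc N} (hw : w ∈ coxeterGroup R) (hwy : w y = z) : y = z := by
  obtain ⟨g, hg⟩ := exists_generic R hR.ne_zero
  set s := y + z with hs_def
  obtain ⟨δ, hδpos, hδ⟩ := exists_delta R s g
  set e := s + δ • g with he_def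
  have hes : ∀ α : Euc N, ⟪e,α⟫ = ⟪s,α⟫ + δ * ⟪g,α⟫ := fun α => by
    rw [he_def, inner_add_left, real_inner_smul_left]
  have hsyz : ∀ α : Euc N, ⟪s,α⟫ = ⟪y,α⟫ + ⟪z,α⟫ := fun α => by
    rw [hs_def, inner_add_left]
  have he : ∀ α ∈ R, ⟪e, α⟫ ≠ 0 := by
    intro α hα
    rw [hes α]
    by_cases hs0 : ⟪s,α⟫ = 0
    · rw [hs0, zero_add]
      exact mul_ne_zero hδpos.ne' (hg α hα)
    · intro hzero
      have habs : |⟪s,α⟫| = |δ * ⟪g,α⟫| := by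
        rw [show ⟪s,α⟫ = -(δ * ⟪g,α⟫) by linarith, abs_neg]
      rw [abs_mul, abs_of_pos hδpos] at habs
      linarith [hδ α hα hs0]
  have hsign : ∀ α ∈ R, 0 < ⟪e,α⟫ → (0 ≤ ⟪y,α⟫ ∧ 0 ≤ ⟪z,α⟫) := by
    intro α hα hepos
    have hkey : ¬ (⟪s,α⟫ < 0) := by
      intro hsneg
      have h1 := hδ α hα (ne_of_lt hsneg)
      have h2 : δ * ⟪g,α⟫ ≤ δ * |⟪g,α⟫| :=
        mul_le_mul_of_nonneg_left (le_abs_self _) hδpos.le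
      rw [abs_of_neg hsneg] at h1
      rw [hes α] at hepos
      linarith
    constructor
    · by_contra hyneg
      push_neg at hyneg
      have hz0 : ⟪z,α⟫ ≤ 0 := by nlinarith [hsep α hα]
      exact hkey (by rw [hsyz α]; linarith)
    · by_contra hzneg
      push_neg at hzneg
      have hy0 : ⟪y,α⟫ ≤ 0 := by nlinarith [hsep α hα]
      exact hkey (by rw [hsyz α]; linarith)
  refine fundamental_domain hR he (fun β hβ => ?_) (fun β hβ => ?_) hw hwy
  · have hm := mem_Rpos.1 hβ
    exact real_inner_comm β y ▸ (hsign β hm.1 hm.2).1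
  · have hm := mem_Rpos.1 hβ
    exact real_inner_comm β z ▸ (hsign β hm.1 hm.2).2

end Final


/-- if `‖x - y‖ ≤ ‖x - σ_α y‖` for every root, then `d(x,y) = ‖x - y‖`. -/
theorem orbDist_eq_of_min_over_reflections {N : ℕ} (R : Finset (Euc N))
    (hR : IsNormalizedRootSystem R) (hG : Finite (coxeterGroup R)) (x y : Euc N)
    (h : ∀ α ∈ R, ‖x - y‖ ≤ ‖x - sigmaRefl α y‖) :
    orbDist (coxeterGroup R) x y = ‖x - y‖ := by
  classical
  haveI := hG
  haveI : Nonempty (coxeterGroup R) := ⟨1⟩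
  -- translate the hypothesis into inner products
  have hP : ∀ α ∈ R, 0 ≤ ⟪x,α⟫ * ⟪y,α⟫ := by
    intro α hα
    have hsq : ‖x - y‖ ^ 2 ≤ ‖x - sigmaRefl α y‖ ^ 2 :=
      pow_le_pow_left₀ (norm_nonneg _) (h α hα) 2
    rw [norm_sub_sq_real, norm_sub_sq_real, (sigmaRefl α).norm_map] at hsq
    have hin : ⟪x, sigmaRefl α y⟫ = ⟪x,y⟫ - ⟪α,y⟫ * ⟪x,α⟫ := by
      rw [sigma_apply (root_inner_self hR hα), inner_sub_right, real_inner_smul_right]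
    rw [hin] at hsq
    have : 0 ≤ ⟪α,y⟫ * ⟪x,α⟫ := by linarith
    calc (0:ℝ) ≤ ⟪α,y⟫ * ⟪x,α⟫ := this
      _ = ⟪x,α⟫ * ⟪y,α⟫ := by rw [real_inner_comm α y]; ring
  -- pick a lexicographic maximizer of σ ↦ (⟪x, σ y⟫, ⟪y, σ y⟫)
  obtain ⟨σ₁, hσ₁⟩ := Finite.exists_max
    (fun σ : coxeterGroup R => ⟪x, (σ : Euc N ≃ₗᵢ[ℝ] Euc N) y⟫)
  haveI : Nonempty {σ : coxeterGroup R //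
      ⟪x, (σ : Euc N ≃ₗᵢ[ℝ] Euc N) y⟫ = ⟪x, (σ₁ : Euc N ≃ₗᵢ[ℝ] Euc N) y⟫} := ⟨⟨σ₁, rfl⟩⟩
  obtain ⟨σ₂, hσ₂⟩ := Finite.exists_max
    (fun τ : {σ : coxeterGroup R //
        ⟪x, (σ : Euc N ≃ₗᵢ[ℝ] Euc N) y⟫ = ⟪x, (σ₁ : Euc N ≃ₗᵢ[ℝ] Euc N) y⟫} =>
      ⟪y, ((τ : coxeterGroup R) : Euc N ≃ₗᵢ[ℝ] Euc N) y⟫)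
  set σ₀ : coxeterGroup R := (σ₂ : coxeterGroup R) with hσ₀def
  set z : Euc N := (σ₀ : Euc N ≃ₗᵢ[ℝ] Euc N) y with hzdef
  have hmax : ∀ σ : coxeterGroup R, ⟪x, (σ : Euc N ≃ₗᵢ[ℝ] Euc N) y⟫ ≤ ⟪x, z⟫ := by
    intro σ
    rw [hzdef, hσ₀def, σ₂.2]
    exact hσ₁ σ
  have htie : ∀ σ : coxeterGroup R, ⟪x, (σ : Euc N ≃ₗᵢ[ℝ] Euc N) y⟫ = ⟪x, z⟫ →
      ⟪y, (σ : Euc N ≃ₗᵢ[ℝ] Euc N) y⟫ ≤ ⟪y, z⟫ := by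
    intro σ hσ
    have hmem : ⟪x, (σ : Euc N ≃ₗᵢ[ℝ] Euc N) y⟫ = ⟪x, (σ₁ : Euc N ≃ₗᵢ[ℝ] Euc N) y⟫ := by
      rw [hσ, hzdef, hσ₀def, σ₂.2]
    exact hσ₂ ⟨σ, hmem⟩
  -- the reflected point
  have hrefl : ∀ (α : Euc N) (hα : α ∈ R), ((⟨sigmaRefl α, sigma_mem hα⟩ * σ₀ :
      coxeterGroup R) : Euc N ≃ₗᵢ[ℝ] Euc N) y = sigmaRefl α z := by
    intro α hα
    rfl
  have hinz : ∀ α ∈ R, ⟪x, sigmaRefl α z⟫ = ⟪x,z⟫ - ⟪α,z⟫ * ⟪x,α⟫ := by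
    intro α hα
    rw [sigma_apply (root_inner_self hR hα), inner_sub_right, real_inner_smul_right]
  have hinzy : ∀ α ∈ R, ⟪y, sigmaRefl α z⟫ = ⟪y,z⟫ - ⟪α,z⟫ * ⟪y,α⟫ := by
    intro α hα
    rw [sigma_apply (root_inner_self hR hα), inner_sub_right, real_inner_smul_right]
  have hPz : ∀ α ∈ R, 0 ≤ ⟪x,α⟫ * ⟪z,α⟫ := by
    intro α hα
    have h1 := hmax (⟨sigmaRefl α, sigma_mem hα⟩ * σ₀)
    rw [hrefl α hα, hinz α hα] at h1
    have : 0 ≤ ⟪α,z⟫ * ⟪x,α⟫ := by linarith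
    calc (0:ℝ) ≤ ⟪α,z⟫ * ⟪x,α⟫ := this
      _ = ⟪x,α⟫ * ⟪z,α⟫ := by rw [real_inner_comm α z]; ring
  -- z = y
  have hyz : y = z := by
    by_cases hstrict : ∃ α ∈ R, ⟪y,α⟫ * ⟪z,α⟫ < 0
    · exfalso
      obtain ⟨α, hα, hneg⟩ := hstrict
      have hx0 : ⟪x,α⟫ = 0 := zero_of_mul_signs (hP α hα) (hPz α hα) hneg
      have heq : ⟪x, ((⟨sigmaRefl α, sigma_mem hα⟩ * σ₀ :
          coxeterGroup R) : Euc N ≃ₗᵢ[ℝ] Euc N) y⟫ = ⟪x, z⟫ := by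
        rw [hrefl α hα, hinz α hα, hx0, mul_zero, sub_zero]
      have h2 := htie _ heq
      rw [hrefl α hα, hinzy α hα] at h2
      have h3 : 0 ≤ ⟪α,z⟫ * ⟪y,α⟫ := by linarith
      have h4 : ⟪α,z⟫ * ⟪y,α⟫ = ⟪y,α⟫ * ⟪z,α⟫ := by
        rw [real_inner_comm α z]; ring
      linarith [h4 ▸ h3]
    · push_neg at hstrict
      exact same_side_eq hR hstrict σ₀.2 rfl
  -- conclude
  have hfinal : ∀ σ : coxeterGroup R, ‖x - y‖ ≤ ‖x - (σ : Euc N ≃ₗᵢ[ℝ] Euc N) y‖ := by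
    intro σ
    have h1 : ⟪x, (σ : Euc N ≃ₗᵢ[ℝ] Euc N) y⟫ ≤ ⟪x, y⟫ := by
      have := hmax σ
      rwa [← hyz] at this
    rw [← pow_le_pow_iff_left₀ (norm_nonneg _) (norm_nonneg _) (two_ne_zero)]
    rw [norm_sub_sq_real, norm_sub_sq_real, (σ : Euc N ≃ₗᵢ[ℝ] Euc N).norm_map]
    linarith
  apply le_antisymm
  · have hb : BddBelow (Set.range fun σ : coxeterGroup R =>
        ‖x - (σ : Euc N ≃ₗᵢ[ℝ] Euc N) y‖) := by
      refine ⟨0, ?_⟩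
      rintro r ⟨σ, rfl⟩
      exact norm_nonneg _
    have := ciInf_le hb (1 : coxeterGroup R)
    rwa [show ((1 : coxeterGroup R) : Euc N ≃ₗᵢ[ℝ] Euc N) y = y from rfl] at this
  · exact le_ciInf hfinal
end

section
/- With the notation above, if x, y ∈ ℝ^N satisfy d(x,y) < ‖x − y‖ (i.e., y is not in the closed Weyl chamber of x, so n(x,y) ≥ 1), then there exists α ∈ R such that ‖x − y‖ > ‖x − σ_α(y)‖. -/
open scoped RealInnerProductSpace
noncomputable section

lemma norm_sq_two {N : ℕ} {β : Euc N} (hβ : ‖β‖ = Real.sqrt 2) : (‖β‖ : ℝ)^2 = 2 := by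
  rw [hβ]; exact Real.sq_sqrt (by norm_num)

lemma sigmaRefl_apply {N : ℕ} {β : Euc N} (hβ : ‖β‖ = Real.sqrt 2) (v : Euc N) :
    sigmaRefl β v = v - ⟪β, v⟫ • β := by
  have h2 : (‖β‖ : ℝ)^2 = 2 := norm_sq_two hβ
  rw [sigmaRefl, Submodule.reflection_apply, Submodule.starProjection_orthogonal_val,
    Submodule.starProjection_singleton, h2, two_smul]
  abel_nf
  push_cast
  module

namespace ERC
variable {N : ℕ}

lemma sigma_inner (β v : Euc N) (hβ : ‖β‖ = Real.sqrt 2) :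
    sigmaRefl β v = v - ⟪β, v⟫ • β := sigmaRefl_apply hβ v

lemma sigmaRefl_self_apply {β : Euc N} (hβ : ‖β‖ = Real.sqrt 2) :
    sigmaRefl β β = -β := by
  rw [sigmaRefl_apply hβ]
  have : ⟪β, β⟫ = 2 := by
    rw [real_inner_self_eq_norm_sq]; exact norm_sq_two hβ
  rw [this]; module

lemma sigmaRefl_neg (β : Euc N) (hβ : ‖β‖ = Real.sqrt 2) :
    sigmaRefl (-β) = sigmaRefl β := by
  have hβ' : ‖(-β : Euc N)‖ = Real.sqrt 2 := by rwa [norm_neg]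
  apply LinearIsometryEquiv.ext
  intro v
  rw [sigmaRefl_apply hβ, sigmaRefl_apply hβ', inner_neg_left]
  module

lemma sigmaRefl_mul_self (β : Euc N) : sigmaRefl β * sigmaRefl β = 1 := by
  apply LinearIsometryEquiv.ext
  intro v
  have := Submodule.reflection_involutive ((ℝ ∙ β)ᗮ) v
  simpa [sigmaRefl, LinearIsometryEquiv.coe_mul, Function.comp] using this

lemma sigmaRefl_invol (β v : Euc N) : sigmaRefl β (sigmaRefl β v) = v := by
  have h := congrArg (fun (w : Euc N ≃ₗᵢ[ℝ] Euc N) => w v) (sigmaRefl_mul_self β)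
  simpa using h

lemma sigmaRefl_conj (w : Euc N ≃ₗᵢ[ℝ] Euc N) (β : Euc N) (hβ : ‖β‖ = Real.sqrt 2) :
    sigmaRefl (w β) = w * sigmaRefl β * w⁻¹ := by
  have hwβ : ‖w β‖ = Real.sqrt 2 := by rw [LinearIsometryEquiv.norm_map]; exact hβ
  apply LinearIsometryEquiv.ext
  intro v
  have h1 : (w * sigmaRefl β * w⁻¹) v = w (sigmaRefl β (w⁻¹ v)) := rfl
  rw [sigmaRefl_apply hwβ, h1, sigmaRefl_apply hβ]
  have h2 : ⟪β, (w⁻¹ : Euc N ≃ₗᵢ[ℝ] Euc N) v⟫ = ⟪w β, v⟫ := by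
    conv_rhs => rw [show v = w ((w⁻¹ : Euc N ≃ₗᵢ[ℝ] Euc N) v) from (by simp)]
    rw [LinearIsometryEquiv.inner_map_map]
  rw [map_sub, map_smul, h2]
  simp


section PosDef
variable (x y : Euc N)

def cvec (v : Euc N) : ℕ → ℝ
  | 0 => ⟪v, y⟫
  | 1 => ⟪v, x⟫
  | (n+2) => if h : n < N then v ⟨n, h⟩ else 0

variable {x y}

lemma cvec_add (u v : Euc N) (i : ℕ) :
    cvec x y (u + v) i = cvec x y u i + cvec x y v i := by
  match i with
  | 0 => simp [cvec, inner_add_left]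
  | 1 => simp [cvec, inner_add_left]
  | (n+2) =>
    simp only [cvec]
    split
    · rfl
    · norm_num

lemma cvec_smul (t : ℝ) (u : Euc N) (i : ℕ) :
    cvec x y (t • u) i = t * cvec x y u i := by
  match i with
  | 0 => exact real_inner_smul_left u y t
  | 1 => exact real_inner_smul_left u x t
  | (n+2) =>
    simp only [cvec]
    split
    · rfl
    · norm_num

lemma cvec_neg (u : Euc N) (i : ℕ) : cvec x y (-u) i = - cvec x y u i := by
  have : (-u : Euc N) = (-1 : ℝ) • u := by module
  rw [this, cvec_smul]; ring

lemma cvec_zero (i : ℕ) : cvec x y (0 : Euc N) i = 0 := by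
  have : (0 : Euc N) = (0 : ℝ) • (0 : Euc N) := by module
  rw [this, cvec_smul]; ring

lemma cvec_sub (u v : Euc N) (i : ℕ) :
    cvec x y (u - v) i = cvec x y u i - cvec x y v i := by
  have : u - v = u + (-v) := by module
  rw [this, cvec_add, cvec_neg]; ring

lemma eq_zero_of_cvec (v : Euc N) (h : ∀ i, cvec x y v i = 0) : v = 0 := by
  ext j
  have := h (j + 2)
  simp only [cvec] at this
  rw [dif_pos j.isLt] at this
  simpa using this

variable (x y)

def Pos (v : Euc N) : Prop := ∃ j, (∀ i < j, cvec x y v i = 0) ∧ 0 < cvec x y v j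

variable {x y}

lemma pos_add {u v : Euc N} (hu : Pos x y u) (hv : Pos x y v) : Pos x y (u + v) := by
  obtain ⟨j₁, h₁, p₁⟩ := hu
  obtain ⟨j₂, h₂, p₂⟩ := hv
  refine ⟨min j₁ j₂, fun i hi => ?_, ?_⟩
  · rw [cvec_add, h₁ i (lt_of_lt_of_le hi (min_le_left _ _)),
      h₂ i (lt_of_lt_of_le hi (min_le_right _ _))]; ring
  · rcases le_total j₁ j₂ with h | h
    · rw [min_eq_left h, cvec_add]
      rcases eq_or_lt_of_le h with rfl | hlt
      · linarith
      · rw [h₂ j₁ hlt]; linarith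
    · rw [min_eq_right h, cvec_add]
      rcases eq_or_lt_of_le h with h' | hlt
      · rw [← h'] at p₁; linarith
      · rw [h₁ j₂ hlt]; linarith

lemma pos_smul {u : Euc N} {t : ℝ} (ht : 0 < t) (hu : Pos x y u) : Pos x y (t • u) := by
  obtain ⟨j, h, p⟩ := hu
  exact ⟨j, fun i hi => by rw [cvec_smul, h i hi, mul_zero],
    by rw [cvec_smul]; positivity⟩

lemma not_pos_zero : ¬ Pos x y (0 : Euc N) := by
  rintro ⟨j, -, p⟩
  rw [cvec_zero] at p; exact lt_irrefl _ p

lemma not_pos_and_neg {v : Euc N} (h1 : Pos x y v) (h2 : Pos x y (-v)) : False := by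
  obtain ⟨j₁, h₁, p₁⟩ := h1
  obtain ⟨j₂, h₂, p₂⟩ := h2
  rcases lt_trichotomy j₁ j₂ with h | rfl | h
  · have := h₂ j₁ h; rw [cvec_neg] at this
    rw [show cvec x y v j₁ = 0 by linarith] at p₁; exact lt_irrefl _ p₁
  · rw [cvec_neg] at p₂; linarith
  · have := h₁ j₂ h
    rw [cvec_neg, this] at p₂; norm_num at p₂

lemma pos_or_neg_of_ne {v : Euc N} (hv : v ≠ 0) : Pos x y v ∨ Pos x y (-v) := by
  have hex : ∃ i, cvec x y v i ≠ 0 := by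
    by_contra hc
    push_neg at hc
    exact hv (eq_zero_of_cvec v hc)
  classical
  let j := Nat.find hex
  have hj : cvec x y v j ≠ 0 := Nat.find_spec hex
  have hmin : ∀ i < j, cvec x y v i = 0 := fun i hi => by
    by_contra hne; exact Nat.find_min hex hi hne
  rcases lt_or_gt_of_ne hj with h | h
  · right
    exact ⟨j, fun i hi => by rw [cvec_neg, hmin i hi]; ring, by rw [cvec_neg]; linarith⟩
  · left; exact ⟨j, hmin, h⟩

variable (x y) in
def Nonneg (v : Euc N) : Prop := v = 0 ∨ Pos x y v

lemma nonneg_add {u v : Euc N} (hu : Nonneg x y u) (hv : Nonneg x y v) : Nonneg x y (u + v) := by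
  rcases hu with rfl | hu
  · simpa using hv
  rcases hv with rfl | hv
  · rw [add_zero]; exact Or.inr hu
  · exact Or.inr (pos_add hu hv)

lemma pos_add_nonneg {u v : Euc N} (hu : Pos x y u) (hv : Nonneg x y v) : Pos x y (u + v) := by
  rcases hv with rfl | hv
  · simpa using hu
  · exact pos_add hu hv

lemma nonneg_smul {u : Euc N} {t : ℝ} (ht : 0 ≤ t) (hu : Nonneg x y u) :
    Nonneg x y (t • u) := by
  rcases hu with rfl | hu
  · left; simp
  rcases eq_or_lt_of_le ht with rfl | ht'
  · left; simp
  · exact Or.inr (pos_smul ht' hu)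

lemma nonneg_sum {ι : Type*} (T : Finset ι) (g : ι → Euc N)
    (h : ∀ i ∈ T, Nonneg x y (g i)) : Nonneg x y (∑ i ∈ T, g i) := by
  classical
  induction T using Finset.induction_on with
  | empty => left; simp
  | insert _ _ hnot ih =>
    rw [Finset.sum_insert hnot]
    exact nonneg_add (h _ (Finset.mem_insert_self _ _))
      (ih fun i hi => h i (Finset.mem_insert_of_mem hi))

end PosDef


section Cone
open Classical

variable (x y : Euc N)

def Sp (R : Finset (Euc N)) : Finset (Euc N) := R.filter (Pos x y)

def InCone (T : Finset (Euc N)) (v : Euc N) : Prop :=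
  ∃ f : Euc N → ℝ, (∀ b, 0 ≤ f b) ∧ v = ∑ b ∈ T, f b • b

variable {x y}

lemma mem_Sp {R : Finset (Euc N)} {v : Euc N} :
    v ∈ Sp x y R ↔ v ∈ R ∧ Pos x y v := by
  simp [Sp]

lemma inCone_self {T : Finset (Euc N)} {a : Euc N} (ha : a ∈ T) : InCone T a := by
  refine ⟨fun b => if b = a then 1 else 0, fun b => by dsimp; split <;> norm_num, ?_⟩
  rw [Finset.sum_eq_single_of_mem a ha (fun b _ hb => by simp [hb])]
  simp

lemma inCone_subst {T : Finset (Euc N)} {a v : Euc N} (haT : a ∈ T)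
    (ha : InCone (T.erase a) a) (hv : InCone T v) : InCone (T.erase a) v := by
  obtain ⟨f, hf, hfv⟩ := hv
  obtain ⟨g, hg, hga⟩ := ha
  refine ⟨fun b => f b + f a * g b, fun b => add_nonneg (hf b) (mul_nonneg (hf a) (hg b)), ?_⟩
  have h1 : v = f a • a + ∑ b ∈ T.erase a, f b • b := by
    rw [hfv, ← Finset.add_sum_erase _ _ haT]
  have h2 : ∑ b ∈ T.erase a, (f b + f a * g b) • b
      = (∑ b ∈ T.erase a, f b • b) + ∑ b ∈ T.erase a, f a • (g b • b) := by
    rw [← Finset.sum_add_distrib]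
    exact Finset.sum_congr rfl fun b _ => by rw [add_smul, smul_smul]
  dsimp only
  rw [h2, ← Finset.smul_sum, ← hga, h1]
  abel

variable (x y)

def GoodCone (R T : Finset (Euc N)) : Prop := ∀ γ ∈ Sp x y R, InCone T γ

lemma exists_delta (R : Finset (Euc N)) :
    ∃ T ∈ ((Sp x y R).powerset.filter (fun T => GoodCone x y R T)),
      ∀ T' ∈ ((Sp x y R).powerset.filter (fun T => GoodCone x y R T)),
        T.card ≤ T'.card := by
  apply Finset.exists_min_image
  refine ⟨Sp x y R, ?_⟩
  rw [Finset.mem_filter]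
  exact ⟨Finset.mem_powerset_self _, fun γ hγ => inCone_self hγ⟩

def Delta (R : Finset (Euc N)) : Finset (Euc N) := (exists_delta x y R).choose

variable {x y}

lemma delta_subset (R : Finset (Euc N)) : Delta x y R ⊆ Sp x y R := by
  have := (exists_delta x y R).choose_spec.1
  rw [Finset.mem_filter, Finset.mem_powerset] at this
  exact this.1

lemma delta_cone {R : Finset (Euc N)} {γ : Euc N} (hγ : γ ∈ Sp x y R) :
    InCone (Delta x y R) γ := by
  have := (exists_delta x y R).choose_spec.1
  rw [Finset.mem_filter] at this
  exact this.2 γ hγ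

lemma delta_min {R : Finset (Euc N)} {T : Finset (Euc N)} (hT : T ⊆ Sp x y R)
    (hT2 : GoodCone x y R T) : (Delta x y R).card ≤ T.card := by
  apply (exists_delta x y R).choose_spec.2
  rw [Finset.mem_filter, Finset.mem_powerset]
  exact ⟨hT, hT2⟩

lemma delta_indecomposable {R : Finset (Euc N)} {δ : Euc N} (hδ : δ ∈ Delta x y R)
    (hc : InCone ((Delta x y R).erase δ) δ) : False := by
  have hgood : GoodCone x y R ((Delta x y R).erase δ) := fun γ hγ =>
    inCone_subst hδ hc (delta_cone hγ)
  have hsub : (Delta x y R).erase δ ⊆ Sp x y R :=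
    (Finset.erase_subset _ _).trans (delta_subset R)
  have h1 := delta_min hsub hgood
  have h2 := Finset.card_erase_of_mem hδ
  have hpos : 0 < (Delta x y R).card := Finset.card_pos.mpr ⟨δ, hδ⟩
  omega

end Cone

section RootFacts
open Classical
variable {R : Finset (Euc N)} {x y : Euc N}

lemma root_ne_zero (hR : IsNormalizedRootSystem R) {α : Euc N} (hα : α ∈ R) : α ≠ 0 :=
  fun h => hR.ne_zero (h ▸ hα)

lemma pos_of_mem_sp {α : Euc N} (hα : α ∈ Sp x y R) : Pos x y α := (mem_Sp.1 hα).2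

lemma sp_mem_R {α : Euc N} (hα : α ∈ Sp x y R) : α ∈ R := (mem_Sp.1 hα).1

lemma sp_inner_y_nonneg {α : Euc N} (hα : α ∈ Sp x y R) : 0 ≤ ⟪α, y⟫ := by
  obtain ⟨j, hj, hp⟩ := pos_of_mem_sp hα
  rcases Nat.eq_zero_or_pos j with rfl | hj0
  · exact le_of_lt hp
  · have := hj 0 hj0
    simp only [cvec] at this
    rw [this]

lemma sp_inner_x_nonneg (hxy : ∀ α ∈ R, 0 ≤ ⟪α, x⟫ * ⟪α, y⟫)
    {α : Euc N} (hα : α ∈ Sp x y R) : 0 ≤ ⟪α, x⟫ := by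
  rcases lt_or_eq_of_le (sp_inner_y_nonneg hα) with hy0 | hy0
  · have := hxy α (sp_mem_R hα)
    by_contra hneg
    push_neg at hneg
    nlinarith
  · obtain ⟨j, hj, hp⟩ := pos_of_mem_sp hα
    match j, hj, hp with
    | 0, hj, hp => simp only [cvec] at hp; rw [← hy0] at hp; norm_num at hp
    | 1, hj, hp => simp only [cvec] at hp; exact le_of_lt hp
    | (n+2), hj, hp =>
      have := hj 1 (by omega)
      simp only [cvec] at this
      rw [this]

lemma mem_sp_or_neg (hR : IsNormalizedRootSystem R) {α : Euc N} (hα : α ∈ R) :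
    α ∈ Sp x y R ∨ -α ∈ Sp x y R := by
  rcases pos_or_neg_of_ne (x := x) (y := y) (root_ne_zero hR hα) with h | h
  · exact Or.inl (mem_Sp.2 ⟨hα, h⟩)
  · exact Or.inr (mem_Sp.2 ⟨hR.neg_mem α hα, h⟩)

lemma simple_refl_mem_Sp (hR : IsNormalizedRootSystem R) {δ γ : Euc N}
    (hδ : δ ∈ Delta x y R) (hγ : γ ∈ Sp x y R) (hne : γ ≠ δ) :
    sigmaRefl δ γ ∈ Sp x y R := by
  have hδS : δ ∈ Sp x y R := delta_subset R hδ
  have hδR : δ ∈ R := sp_mem_R hδS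
  have hδP : Pos x y δ := pos_of_mem_sp hδS
  have hγR : γ ∈ R := sp_mem_R hγ
  have hγP : Pos x y γ := pos_of_mem_sp hγ
  have hmem : sigmaRefl δ γ ∈ R := hR.refl_mem δ hδR γ hγR
  rw [mem_Sp]
  refine ⟨hmem, ?_⟩
  by_contra hnp
  have hPneg : Pos x y (-(sigmaRefl δ γ)) :=
    (pos_or_neg_of_ne (root_ne_zero hR hmem)).resolve_left hnp
  have hformula : sigmaRefl δ γ = γ - ⟪δ, γ⟫ • δ := sigmaRefl_apply (hR.norm_eq δ hδR) γ
  set c := ⟪δ, γ⟫ with hc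
  have hnegmem : -(sigmaRefl δ γ) ∈ Sp x y R := mem_Sp.2 ⟨hR.neg_mem _ hmem, hPneg⟩
  obtain ⟨d, hd, hdeq⟩ := delta_cone hnegmem
  obtain ⟨a, ha, haeq⟩ := delta_cone hγ
  have key : c • δ = ∑ β ∈ Delta x y R, (d β + a β) • β := by
    have h1 : c • δ = (-(sigmaRefl δ γ)) + γ := by rw [hformula]; module
    rw [h1]
    conv_lhs => rw [hdeq, haeq]
    rw [← Finset.sum_add_distrib]
    exact Finset.sum_congr rfl fun β _ => by rw [add_smul]
  have hsplit : (c - (d δ + a δ)) • δ = ∑ β ∈ (Delta x y R).erase δ, (d β + a β) • β := by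
    rw [← Finset.add_sum_erase _ _ hδ] at key
    rw [sub_smul, key]
    abel
  have hβ₀ : ∃ β₀ ∈ (Delta x y R).erase δ, 0 < a β₀ := by
    by_contra hc0
    push_neg at hc0
    have hzero : ∀ β ∈ (Delta x y R).erase δ, a β = 0 :=
      fun β hb => le_antisymm (hc0 β hb) (ha β)
    have hγeq : γ = a δ • δ := by
      rw [haeq, ← Finset.add_sum_erase _ _ hδ,
        Finset.sum_eq_zero (fun β hb => by rw [hzero β hb, zero_smul]), add_zero]
    have hsm : a δ • δ = δ ∨ a δ • δ = -δ := hR.smul_mem δ hδR (a δ) (hγeq ▸ hγR)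
    rcases hsm with h | h
    · exact hne (by rw [hγeq, h])
    · refine not_pos_and_neg hδP ?_
      rw [← h, ← hγeq]
      exact hγP
  obtain ⟨β₀, hβ₀mem, hβ₀pos⟩ := hβ₀
  have hβ₀Sp : β₀ ∈ Sp x y R := delta_subset R (Finset.mem_of_mem_erase hβ₀mem)
  have hSpos : Pos x y (∑ β ∈ (Delta x y R).erase δ, (d β + a β) • β) := by
    rw [← Finset.add_sum_erase _ _ hβ₀mem]
    apply pos_add_nonneg
    · exact pos_smul (by linarith [hd β₀]) (pos_of_mem_sp hβ₀Sp)
    · apply nonneg_sum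
      intro β hb
      have hβSp : β ∈ Sp x y R := delta_subset R
        (Finset.mem_of_mem_erase (Finset.mem_of_mem_erase hb))
      exact nonneg_smul (add_nonneg (hd β) (ha β)) (Or.inr (pos_of_mem_sp hβSp))
  rcases le_or_gt (c - (d δ + a δ)) 0 with hc1 | hc1
  · apply not_pos_zero (x := x) (y := y)
    have h0 : (0 : Euc N) = (∑ β ∈ (Delta x y R).erase δ, (d β + a β) • β)
        + ((d δ + a δ) - c) • δ := by
      rw [← hsplit]
      module
    rw [h0]
    exact pos_add_nonneg hSpos (nonneg_smul (by linarith) (Or.inr hδP))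
  · apply delta_indecomposable hδ
    refine ⟨fun β => (d β + a β) / (c - (d δ + a δ)),
      fun β => div_nonneg (add_nonneg (hd β) (ha β)) hc1.le, ?_⟩
    have h2 : δ = (c - (d δ + a δ))⁻¹ • ((c - (d δ + a δ)) • δ) := by
      rw [smul_smul, inv_mul_cancel₀ (ne_of_gt hc1), one_smul]
    conv_lhs => rw [h2, hsplit]
    rw [Finset.smul_sum]
    exact Finset.sum_congr rfl fun β _ => by
      simp only [smul_smul, div_eq_inv_mul]

end RootFacts

section Words
open Classical
variable {R : Finset (Euc N)} {x y : Euc N}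

lemma sigmaRefl_inv (β : Euc N) : (sigmaRefl β)⁻¹ = sigmaRefl β :=
  inv_eq_of_mul_eq_one_left (sigmaRefl_mul_self β)

def wprod (l : List (Euc N)) : Euc N ≃ₗᵢ[ℝ] Euc N := (l.map sigmaRefl).prod

lemma wprod_nil : wprod ([] : List (Euc N)) = 1 := rfl

lemma wprod_cons (δ : Euc N) (l : List (Euc N)) :
    wprod (δ :: l) = sigmaRefl δ * wprod l := by
  simp [wprod]

lemma wprod_append (l₁ l₂ : List (Euc N)) :
    wprod (l₁ ++ l₂) = wprod l₁ * wprod l₂ := by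
  simp [wprod]

lemma wprod_singleton (δ : Euc N) : wprod [δ] = sigmaRefl δ := by
  simp [wprod]

lemma mul_apply (u v : Euc N ≃ₗᵢ[ℝ] Euc N) (z : Euc N) : (u * v) z = u (v z) := rfl

lemma wprod_mem_R (hR : IsNormalizedRootSystem R) {l : List (Euc N)}
    (hl : ∀ δ ∈ l, δ ∈ R) {α : Euc N} (hα : α ∈ R) : wprod l α ∈ R := by
  induction l with
  | nil => simpa [wprod_nil] using hα
  | cons δ t ih =>
    rw [wprod_cons, mul_apply]
    exact hR.refl_mem δ (hl δ List.mem_cons_self) _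
      (ih fun β hβ => hl β (List.mem_cons_of_mem _ hβ))

lemma wprod_mem_coxeter {l : List (Euc N)} (hl : ∀ δ ∈ l, δ ∈ R) :
    wprod l ∈ coxeterGroup R := by
  induction l with
  | nil => exact Subgroup.one_mem _
  | cons δ t ih =>
    rw [wprod_cons]
    refine Subgroup.mul_mem _ ?_ (ih fun β hβ => hl β (List.mem_cons_of_mem _ hβ))
    apply Subgroup.subset_closure
    exact ⟨δ, by exact_mod_cast hl δ List.mem_cons_self, rfl⟩

lemma coxeter_maps_R (hR : IsNormalizedRootSystem R) {w : Euc N ≃ₗᵢ[ℝ] Euc N}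
    (hw : w ∈ coxeterGroup R) : ∀ α ∈ R, w α ∈ R := by
  induction hw using Subgroup.closure_induction with
  | mem w hw =>
    obtain ⟨δ, hδ, rfl⟩ := hw
    exact fun α hα => hR.refl_mem δ (by exact_mod_cast hδ) α hα
  | one => exact fun α hα => hα
  | mul u v hu hv hu' hv' => exact fun α hα => hu' _ (hv' α hα)
  | inv u hu hu' =>
    intro α hα
    have hinj : Function.Injective (fun β => u β) := fun b c hbc => by
      simpa using congrArg (u.symm) hbc
    have himg : R.image (fun β => u β) = R := by
      apply Finset.eq_of_subset_of_card_le
      · intro β hβ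
        obtain ⟨γ, hγ, rfl⟩ := Finset.mem_image.1 hβ
        exact hu' γ hγ
      · rw [Finset.card_image_of_injective _ hinj]
    obtain ⟨γ, hγ, hγeq⟩ := Finset.mem_image.1 (himg ▸ hα)
    have : u⁻¹ (u γ) = γ := by
      simpa using congrArg (u.symm) (rfl : u γ = u γ)
    rw [← hγeq]
    rw [show u⁻¹ (u γ) = γ from this]
    exact hγ

variable (x y) in
def rank (R : Finset (Euc N)) (γ : Euc N) : ℕ :=
  ((Sp x y R).filter (fun γ' => Pos x y (γ - γ'))).card

lemma gen_refl (hR : IsNormalizedRootSystem R) (n : ℕ) :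
    ∀ γ ∈ Sp x y R, rank x y R γ ≤ n →
    ∃ l : List (Euc N), (∀ δ ∈ l, δ ∈ Delta x y R) ∧ sigmaRefl γ = wprod l := by
  induction n using Nat.strong_induction_on with
  | _ n IH =>
  intro γ hγ hrank
  by_cases hδ : γ ∈ Delta x y R
  · exact ⟨[γ], by simp [hδ], (wprod_singleton γ).symm⟩
  obtain ⟨a, ha, haeq⟩ := delta_cone hγ
  have hγR : γ ∈ R := sp_mem_R hγ
  have hinner : ⟪γ, γ⟫ = 2 := by
    rw [real_inner_self_eq_norm_sq]
    exact norm_sq_two (hR.norm_eq γ hγR)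
  have hex : ∃ β ∈ Delta x y R, 0 < a β * ⟪γ, β⟫ := by
    by_contra hcon
    push_neg at hcon
    have hsum : ∑ β ∈ Delta x y R, a β * ⟪γ, β⟫ = 2 := by
      have h0 : ⟪γ, γ⟫ = ⟪γ, ∑ b ∈ Delta x y R, a b • b⟫ :=
        congrArg (fun z => ⟪γ, z⟫) haeq
      rw [inner_sum] at h0
      rw [← hinner, h0]
      exact Finset.sum_congr rfl fun β _ => (real_inner_smul_right γ β (a β)).symm
    have : ∑ β ∈ Delta x y R, a β * ⟪γ, β⟫ ≤ 0 :=
      Finset.sum_nonpos fun β hβ => hcon β hβ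
    linarith
  obtain ⟨β, hβΔ, hprod⟩ := hex
  have haβ : 0 < a β := by
    rcases (ha β).lt_or_eq with h | h
    · exact h
    · rw [← h] at hprod; norm_num at hprod
  have hip : 0 < ⟪γ, β⟫ := by nlinarith
  have hβSp : β ∈ Sp x y R := delta_subset R hβΔ
  have hβR : β ∈ R := sp_mem_R hβSp
  have hβnorm : ‖β‖ = Real.sqrt 2 := hR.norm_eq β hβR
  have hneγβ : γ ≠ β := fun h => hδ (h ▸ hβΔ)
  set γ' := sigmaRefl β γ with hγ'def
  have hγ'Sp : γ' ∈ Sp x y R := simple_refl_mem_Sp hR hβΔ hγ hneγβ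
  have hform : γ' = γ - ⟪β, γ⟫ • β := sigmaRefl_apply hβnorm γ
  have hlt : Pos x y (γ - γ') := by
    have : γ - γ' = ⟪β, γ⟫ • β := by rw [hform]; module
    rw [this]
    exact pos_smul (by rwa [real_inner_comm]) (pos_of_mem_sp hβSp)
  have hrank' : rank x y R γ' < rank x y R γ := by
    apply Finset.card_lt_card
    constructor
    · intro η hη
      rw [Finset.mem_filter] at hη ⊢
      refine ⟨hη.1, ?_⟩
      have : γ - η = (γ - γ') + (γ' - η) := by module
      rw [this]
      exact pos_add hlt hη.2
    · intro hsub
      have : γ' ∈ (Sp x y R).filter (fun η => Pos x y (γ - η)) := by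
        rw [Finset.mem_filter]; exact ⟨hγ'Sp, hlt⟩
      have h2 := hsub this
      rw [Finset.mem_filter] at h2
      have := h2.2
      rw [sub_self] at this
      exact not_pos_zero this
  obtain ⟨l', hl', heq⟩ := IH (rank x y R γ') (lt_of_lt_of_le hrank' hrank) γ' hγ'Sp le_rfl
  refine ⟨β :: (l' ++ [β]), ?_, ?_⟩
  · intro δ hδmem
    rcases List.mem_cons.1 hδmem with rfl | hmem
    · exact hβΔ
    rcases List.mem_append.1 hmem with h | h
    · exact hl' δ h
    · rw [List.mem_singleton.1 h]; exact hβΔ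
  · have hback : γ = sigmaRefl β γ' := by
      rw [hγ'def]
      exact (Submodule.reflection_involutive _ γ).symm
    have hconj : sigmaRefl γ = sigmaRefl β * sigmaRefl γ' * (sigmaRefl β)⁻¹ := by
      conv_lhs => rw [hback]
      exact sigmaRefl_conj (sigmaRefl β) γ' (hR.norm_eq γ' (sp_mem_R hγ'Sp))
    rw [hconj, sigmaRefl_inv, wprod_cons, wprod_append, wprod_singleton, ← heq]
    group

end Words

section Rho
open Classical
variable {R : Finset (Euc N)} {x y : Euc N}

lemma wprod_reverse {l : List (Euc N)} : (wprod l)⁻¹ = wprod l.reverse := by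
  induction l with
  | nil => simp [wprod_nil]
  | cons δ t ih =>
    rw [wprod_cons, List.reverse_cons, wprod_append, wprod_singleton,
      mul_inv_rev, ih, sigmaRefl_inv]

lemma gen_coxeter (hR : IsNormalizedRootSystem R) {w : Euc N ≃ₗᵢ[ℝ] Euc N}
    (hw : w ∈ coxeterGroup R) :
    ∃ l : List (Euc N), (∀ δ ∈ l, δ ∈ Delta x y R) ∧ w = wprod l := by
  induction hw using Subgroup.closure_induction with
  | mem w hw =>
    obtain ⟨α, hα, rfl⟩ := hw
    have hαR : α ∈ R := by exact_mod_cast hα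
    rcases mem_sp_or_neg (x := x) (y := y) hR hαR with h | h
    · exact gen_refl hR (rank x y R α) α h le_rfl
    · obtain ⟨l, hl, heq⟩ := gen_refl hR (rank x y R (-α)) (-α) h le_rfl
      refine ⟨l, hl, ?_⟩
      rw [← heq, sigmaRefl_neg α (hR.norm_eq α hαR)]
  | one => exact ⟨[], by simp, rfl⟩
  | mul u v hu hv hu' hv' =>
    obtain ⟨l₁, hl₁, rfl⟩ := hu'
    obtain ⟨l₂, hl₂, rfl⟩ := hv'
    refine ⟨l₁ ++ l₂, ?_, (wprod_append l₁ l₂).symm⟩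
    intro δ hδ
    rcases List.mem_append.1 hδ with h | h
    · exact hl₁ δ h
    · exact hl₂ δ h
  | inv u hu hu' =>
    obtain ⟨l, hl, rfl⟩ := hu'
    exact ⟨l.reverse, fun δ hδ => hl δ (List.mem_reverse.1 hδ), wprod_reverse⟩

variable (x y) in
def rho (R : Finset (Euc N)) : Euc N := ∑ γ ∈ Sp x y R, γ

lemma simple_inner_rho (hR : IsNormalizedRootSystem R) {δ : Euc N} (hδ : δ ∈ Delta x y R) :
    ⟪δ, rho x y R⟫ = 2 := by
  have hδSp : δ ∈ Sp x y R := delta_subset R hδ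
  have hδR : δ ∈ R := sp_mem_R hδSp
  have hδP : Pos x y δ := pos_of_mem_sp hδSp
  have hnorm : ‖δ‖ = Real.sqrt 2 := hR.norm_eq δ hδR
  have hmap : sigmaRefl δ (rho x y R) = ∑ γ ∈ Sp x y R, sigmaRefl δ γ :=
    map_sum (sigmaRefl δ) _ _
  have hsplit : ∑ γ ∈ Sp x y R, sigmaRefl δ γ
      = sigmaRefl δ δ + ∑ γ ∈ (Sp x y R).erase δ, sigmaRefl δ γ :=
    (Finset.add_sum_erase _ _ hδSp).symm
  have hbij : ∑ γ ∈ (Sp x y R).erase δ, sigmaRefl δ γ = ∑ γ ∈ (Sp x y R).erase δ, γ := by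
    apply Finset.sum_nbij' (i := fun γ => sigmaRefl δ γ) (j := fun γ => sigmaRefl δ γ)
    · intro γ hγ
      have hγSp : γ ∈ Sp x y R := Finset.mem_of_mem_erase hγ
      have hne : γ ≠ δ := Finset.ne_of_mem_erase hγ
      have h1 : sigmaRefl δ γ ∈ Sp x y R := simple_refl_mem_Sp hR hδ hγSp hne
      refine Finset.mem_erase.2 ⟨?_, h1⟩
      intro heq
      have : γ = sigmaRefl δ δ := by
        have h2 := congrArg (sigmaRefl δ) heq
        rw [sigmaRefl_invol] at h2
        exact h2
      rw [sigmaRefl_self_apply hnorm] at this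
      exact not_pos_and_neg hδP (this ▸ pos_of_mem_sp hγSp)
    · intro γ hγ
      have hγSp : γ ∈ Sp x y R := Finset.mem_of_mem_erase hγ
      have hne : γ ≠ δ := Finset.ne_of_mem_erase hγ
      have h1 : sigmaRefl δ γ ∈ Sp x y R := simple_refl_mem_Sp hR hδ hγSp hne
      refine Finset.mem_erase.2 ⟨?_, h1⟩
      intro heq
      have : γ = sigmaRefl δ δ := by
        have h2 := congrArg (sigmaRefl δ) heq
        rw [sigmaRefl_invol] at h2
        exact h2
      rw [sigmaRefl_self_apply hnorm] at this
      exact not_pos_and_neg hδP (this ▸ pos_of_mem_sp hγSp)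
    · intro γ _; exact sigmaRefl_invol δ γ
    · intro γ _; exact sigmaRefl_invol δ γ
    · intro γ _; rfl
  have hformula : sigmaRefl δ (rho x y R) = rho x y R - ⟪δ, rho x y R⟫ • δ :=
    sigmaRefl_apply hnorm _
  have h2 : sigmaRefl δ (rho x y R) = rho x y R - ((2:ℝ) • δ) := by
    rw [hmap, hsplit, hbij, sigmaRefl_self_apply hnorm, Finset.sum_erase_eq_sub hδSp]
    show -δ + ((rho x y R) - δ) = rho x y R - (2:ℝ) • δ
    module
  have h4 : ⟪δ, rho x y R⟫ • δ = (2:ℝ) • δ :=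
    sub_right_injective (hformula.symm.trans h2)
  have h3 : (⟪δ, rho x y R⟫ - 2) • δ = 0 := by
    rw [sub_smul, h4, sub_self]
  rcases smul_eq_zero.1 h3 with h | h
  · linarith [sub_eq_zero.1 h]
  · exact absurd h (root_ne_zero hR hδR)

lemma rho_inner_pos (hR : IsNormalizedRootSystem R) {γ : Euc N} (hγ : γ ∈ Sp x y R) :
    0 < ⟪γ, rho x y R⟫ := by
  obtain ⟨a, ha, haeq⟩ := delta_cone hγ
  have h0 : ⟪γ, rho x y R⟫ = ∑ β ∈ Delta x y R, a β * ⟪β, rho x y R⟫ := by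
    conv_lhs => rw [haeq]
    rw [sum_inner]
    exact Finset.sum_congr rfl fun β _ => real_inner_smul_left β (rho x y R) (a β)
  rw [h0]
  have hterm : ∀ β ∈ Delta x y R, a β * ⟪β, rho x y R⟫ = 2 * a β := fun β hβ => by
    rw [simple_inner_rho hR hβ]
    ring
  rw [Finset.sum_congr rfl hterm]
  have hex : ∃ β ∈ Delta x y R, 0 < a β := by
    by_contra hcon
    push_neg at hcon
    have hz : ∀ β ∈ Delta x y R, a β = 0 := fun β hβ => le_antisymm (hcon β hβ) (ha β)
    have : γ = 0 := by
      rw [haeq, Finset.sum_eq_zero fun β hβ => by rw [hz β hβ, zero_smul]]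
    exact root_ne_zero hR (sp_mem_R hγ) this
  obtain ⟨β₀, hβ₀, hβ₀p⟩ := hex
  apply Finset.sum_pos' (fun β hβ => by nlinarith [ha β])
  exact ⟨β₀, hβ₀, by nlinarith⟩

end Rho

section Exchange
open Classical
variable {R : Finset (Euc N)} {x y : Euc N}

lemma delta_mem_R {δ : Euc N} (hδ : δ ∈ Delta x y R) : δ ∈ R :=
  sp_mem_R (delta_subset R hδ)

lemma pivot (hR : IsNormalizedRootSystem R) :
    ∀ (e : List (Euc N)), (∀ δ ∈ e, δ ∈ Delta x y R) → ∀ γ ∈ Sp x y R,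
    ¬ Pos x y (wprod e γ) →
    ∃ e₁ δj e₂, e = e₁ ++ δj :: e₂ ∧ wprod e₂ γ = δj := by
  intro e
  induction e with
  | nil =>
    intro _ γ hγ hnp
    exact absurd (pos_of_mem_sp hγ) (by simpa [wprod_nil] using hnp)
  | cons δ₁ t ih =>
    intro hmem γ hγ hnp
    by_cases hu : Pos x y (wprod t γ)
    · have huSp : wprod t γ ∈ Sp x y R := mem_Sp.2
        ⟨wprod_mem_R hR (fun δ hδ => delta_mem_R (hmem δ (List.mem_cons_of_mem _ hδ)))
          (sp_mem_R hγ), hu⟩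
      by_cases hne : wprod t γ = δ₁
      · exact ⟨[], δ₁, t, rfl, hne⟩
      · exfalso
        apply hnp
        rw [wprod_cons, mul_apply]
        exact pos_of_mem_sp
          (simple_refl_mem_Sp hR (hmem δ₁ List.mem_cons_self) huSp hne)
    · obtain ⟨e₁, δj, e₂, heq, hpiv⟩ :=
        ih (fun δ hδ => hmem δ (List.mem_cons_of_mem _ hδ)) γ hγ hu
      exact ⟨δ₁ :: e₁, δj, e₂, by rw [heq, List.cons_append], hpiv⟩

lemma word_eq_one (hR : IsNormalizedRootSystem R) (n : ℕ) :
    ∀ l : List (Euc N), l.length ≤ n → (∀ δ ∈ l, δ ∈ Delta x y R) →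
    (∀ γ ∈ Sp x y R, Pos x y (wprod l γ)) → wprod l = 1 := by
  induction n using Nat.strong_induction_on with
  | _ n IH =>
  intro l hlen hmem hpres
  rcases List.eq_nil_or_concat l with rfl | ⟨L', δk, rfl⟩
  · exact wprod_nil
  rw [List.concat_eq_append] at *
  have hδkΔ : δk ∈ Delta x y R := hmem δk (by simp)
  have hδkSp : δk ∈ Sp x y R := delta_subset R hδkΔ
  have hδkR : δk ∈ R := sp_mem_R hδkSp
  have hδknorm : ‖δk‖ = Real.sqrt 2 := hR.norm_eq δk hδkR
  have hw : wprod (L' ++ [δk]) = wprod L' * sigmaRefl δk := by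
    rw [wprod_append, wprod_singleton]
  have hPδk : wprod L' δk = -(wprod (L' ++ [δk]) δk) := by
    rw [hw, mul_apply, sigmaRefl_self_apply hδknorm, map_neg, neg_neg]
  have hwPos : Pos x y (wprod (L' ++ [δk]) δk) := hpres δk hδkSp
  have hnP : ¬ Pos x y (wprod L' δk) := by
    rw [hPδk]
    exact fun hcon => not_pos_and_neg hwPos hcon
  obtain ⟨e₁, δj, e₂, heqL, hpiv⟩ := pivot hR L'
    (fun δ hδ => hmem δ (List.mem_append_left _ hδ)) δk hδkSp hnP
  have hconj : sigmaRefl δj = wprod e₂ * sigmaRefl δk * (wprod e₂)⁻¹ := by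
    rw [← hpiv]
    exact sigmaRefl_conj (wprod e₂) δk hδknorm
  have hweq : wprod (L' ++ [δk]) = wprod (e₁ ++ e₂) := by
    rw [hw, heqL, show δj :: e₂ = [δj] ++ e₂ from rfl]
    rw [wprod_append, wprod_append, wprod_singleton, hconj, wprod_append]
    rw [show wprod e₁ * (wprod e₂ * sigmaRefl δk * (wprod e₂)⁻¹ * wprod e₂) * sigmaRefl δk
      = wprod e₁ * wprod e₂ * (sigmaRefl δk * ((wprod e₂)⁻¹ * wprod e₂) * sigmaRefl δk) by group]
    rw [inv_mul_cancel, mul_one, sigmaRefl_mul_self, mul_one]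
  have hlen2 : (e₁ ++ e₂).length ≤ n - 1 := by
    have h1 : L'.length + 1 ≤ n := by simpa using hlen
    have h2 : L'.length = e₁.length + (e₂.length + 1) := by
      rw [heqL]
      simp
    simp only [List.length_append]
    omega
  have hmem2 : ∀ δ ∈ e₁ ++ e₂, δ ∈ Delta x y R := by
    intro δ hδ
    apply hmem
    apply List.mem_append_left
    rw [heqL]
    rcases List.mem_append.1 hδ with h | h
    · exact List.mem_append_left _ h
    · exact List.mem_append_right _ (List.mem_cons_of_mem _ h)
  have hn1 : n - 1 < n := by
    have h1 : L'.length + 1 ≤ n := by simpa using hlen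
    omega
  rw [hweq]
  apply IH (n - 1) hn1 (e₁ ++ e₂) hlen2 hmem2
  intro γ hγ
  rw [← hweq]
  exact hpres γ hγ

lemma coxeter_fix (hR : IsNormalizedRootSystem R) {w : Euc N ≃ₗᵢ[ℝ] Euc N}
    (hw : w ∈ coxeterGroup R)
    (hpres : ∀ γ ∈ Sp x y R, Pos x y (w γ)) : w = 1 := by
  obtain ⟨l, hl, rfl⟩ := gen_coxeter hR hw
  exact word_eq_one hR l.length l le_rfl hl hpres

end Exchange

section Main
open Classical
variable {R : Finset (Euc N)} {x y : Euc N}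

lemma main_ineq (hR : IsNormalizedRootSystem R) (hG : Finite (coxeterGroup R))
    (hxy : ∀ α ∈ R, 0 ≤ ⟪α, x⟫ * ⟪α, y⟫) :
    ∀ σ : coxeterGroup R, ⟪x, (σ : Euc N ≃ₗᵢ[ℝ] Euc N) y⟫ ≤ ⟪x, y⟫ := by
  have hne : Nonempty (coxeterGroup R) := ⟨1⟩
  obtain ⟨σ₀, hσ₀⟩ := Finite.exists_max (fun σ : coxeterGroup R =>
    toLex (⟪x, (σ : Euc N ≃ₗᵢ[ℝ] Euc N) y⟫,
      ⟪rho x y R, (σ : Euc N ≃ₗᵢ[ℝ] Euc N) (rho x y R)⟫))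
  have hpres : ∀ γ ∈ Sp x y R, Pos x y ((σ₀ : Euc N ≃ₗᵢ[ℝ] Euc N) γ) := by
    by_contra hcon
    push_neg at hcon
    obtain ⟨α, hαSp, hαnp⟩ := hcon
    have hαR : α ∈ R := sp_mem_R hαSp
    have hαnorm : ‖α‖ = Real.sqrt 2 := hR.norm_eq α hαR
    have hwα : (σ₀ : Euc N ≃ₗᵢ[ℝ] Euc N) α ∈ R := coxeter_maps_R hR σ₀.2 α hαR
    have hne0 : (σ₀ : Euc N ≃ₗᵢ[ℝ] Euc N) α ≠ 0 := root_ne_zero hR hwα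
    have hδP : Pos x y (-((σ₀ : Euc N ≃ₗᵢ[ℝ] Euc N) α)) :=
      (pos_or_neg_of_ne hne0).resolve_left hαnp
    have hδSp : -((σ₀ : Euc N ≃ₗᵢ[ℝ] Euc N) α) ∈ Sp x y R :=
      mem_Sp.2 ⟨hR.neg_mem _ hwα, hδP⟩
    have hsmem : sigmaRefl α ∈ coxeterGroup R :=
      Subgroup.subset_closure ⟨α, by exact_mod_cast hαR, rfl⟩
    set σ' : coxeterGroup R := σ₀ * ⟨sigmaRefl α, hsmem⟩ with hσ'def
    have happly : ∀ v : Euc N, (σ' : Euc N ≃ₗᵢ[ℝ] Euc N) v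
        = (σ₀ : Euc N ≃ₗᵢ[ℝ] Euc N) (sigmaRefl α v) := fun v => rfl
    have hkey : ∀ v : Euc N, (σ' : Euc N ≃ₗᵢ[ℝ] Euc N) v
        = (σ₀ : Euc N ≃ₗᵢ[ℝ] Euc N) v + ⟪α, v⟫ • (-((σ₀ : Euc N ≃ₗᵢ[ℝ] Euc N) α)) := by
      intro v
      rw [happly, sigmaRefl_apply hαnorm, map_sub, map_smul]
      module
    have hfx : ⟪x, (σ' : Euc N ≃ₗᵢ[ℝ] Euc N) y⟫
        = ⟪x, (σ₀ : Euc N ≃ₗᵢ[ℝ] Euc N) y⟫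
          + ⟪α, y⟫ * ⟪-((σ₀ : Euc N ≃ₗᵢ[ℝ] Euc N) α), x⟫ := by
      rw [hkey y, inner_add_right, real_inner_smul_right, real_inner_comm x]
    have hfρ : ⟪rho x y R, (σ' : Euc N ≃ₗᵢ[ℝ] Euc N) (rho x y R)⟫
        = ⟪rho x y R, (σ₀ : Euc N ≃ₗᵢ[ℝ] Euc N) (rho x y R)⟫
          + ⟪α, rho x y R⟫ * ⟪-((σ₀ : Euc N ≃ₗᵢ[ℝ] Euc N) α), rho x y R⟫ := by
      rw [hkey (rho x y R), inner_add_right, real_inner_smul_right,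
        real_inner_comm (-((σ₀ : Euc N ≃ₗᵢ[ℝ] Euc N) α)) (rho x y R)]
    have hy1 : 0 ≤ ⟪α, y⟫ := sp_inner_y_nonneg hαSp
    have hx1 : 0 ≤ ⟪-((σ₀ : Euc N ≃ₗᵢ[ℝ] Euc N) α), x⟫ := sp_inner_x_nonneg hxy hδSp
    have hρ1 : 0 < ⟪α, rho x y R⟫ := rho_inner_pos hR hαSp
    have hρ2 : 0 < ⟪-((σ₀ : Euc N ≃ₗᵢ[ℝ] Euc N) α), rho x y R⟫ := rho_inner_pos hR hδSp
    have hlt : toLex (⟪x, (σ₀ : Euc N ≃ₗᵢ[ℝ] Euc N) y⟫,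
        ⟪rho x y R, (σ₀ : Euc N ≃ₗᵢ[ℝ] Euc N) (rho x y R)⟫)
        < toLex (⟪x, (σ' : Euc N ≃ₗᵢ[ℝ] Euc N) y⟫,
        ⟪rho x y R, (σ' : Euc N ≃ₗᵢ[ℝ] Euc N) (rho x y R)⟫) := by
      rw [Prod.Lex.lt_iff]
      dsimp only [ofLex_toLex]
      rcases lt_or_eq_of_le (by nlinarith :
          ⟪x, (σ₀ : Euc N ≃ₗᵢ[ℝ] Euc N) y⟫ ≤ ⟪x, (σ' : Euc N ≃ₗᵢ[ℝ] Euc N) y⟫) with h | h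
      · exact Or.inl h
      · refine Or.inr ⟨h, ?_⟩
        rw [hfρ]
        nlinarith
    exact absurd (hσ₀ σ') (not_le.2 hlt)
  have hone : (σ₀ : Euc N ≃ₗᵢ[ℝ] Euc N) = 1 := coxeter_fix hR σ₀.2 hpres
  have hfone : ⟪x, (σ₀ : Euc N ≃ₗᵢ[ℝ] Euc N) y⟫ = ⟪x, y⟫ := by rw [hone]; rfl
  intro σ
  have h1 := hσ₀ σ
  rw [Prod.Lex.le_iff] at h1
  rcases h1 with h | h
  · calc ⟪x, (σ : Euc N ≃ₗᵢ[ℝ] Euc N) y⟫ ≤ ⟪x, (σ₀ : Euc N ≃ₗᵢ[ℝ] Euc N) y⟫ := le_of_lt h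
      _ = ⟪x, y⟫ := hfone
  · rw [← hfone]
    exact le_of_eq h.1

end Main
end ERC


/-- if `d(x,y) < ‖x - y‖` then some single reflection strictly
decreases the distance. -/
theorem exists_reflection_closer {N : ℕ} (R : Finset (Euc N))
    (hR : IsNormalizedRootSystem R) (hG : Finite (coxeterGroup R)) (x y : Euc N)
    (h : orbDist (coxeterGroup R) x y < ‖x - y‖) :
    ∃ α ∈ R, ‖x - sigmaRefl α y‖ < ‖x - y‖ := by
  by_contra hcon
  push_neg at hcon
  have hxy : ∀ α ∈ R, 0 ≤ ⟪α, x⟫ * ⟪α, y⟫ := by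
    intro α hα
    have hnorm : ‖α‖ = Real.sqrt 2 := hR.norm_eq α hα
    have hid : ‖x - sigmaRefl α y‖ ^ 2 = ‖x - y‖ ^ 2 + 2 * (⟪α, x⟫ * ⟪α, y⟫) := by
      rw [sigmaRefl_apply hnorm]
      have h1 : x - (y - ⟪α, y⟫ • α) = (x - y) + ⟪α, y⟫ • α := by module
      rw [h1, norm_add_sq_real, inner_sub_left, real_inner_smul_right x,
        real_inner_smul_right y, norm_smul]
      have h2 : ⟪x, α⟫ = ⟪α, x⟫ := (real_inner_comm x α).symm
      have h3 : ⟪y, α⟫ = ⟪α, y⟫ := (real_inner_comm y α).symm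
      have h4 : (‖α‖ : ℝ) ^ 2 = 2 := norm_sq_two hnorm
      rw [mul_pow, h4]
      rw [h2, h3]
      have h5 : |⟪α, y⟫| ^ 2 = ⟪α, y⟫ ^ 2 := sq_abs _
      rw [Real.norm_eq_abs, h5]
      ring
    have hle := hcon α hα
    have hsq : ‖x - y‖ ^ 2 ≤ ‖x - sigmaRefl α y‖ ^ 2 := by
      have := mul_self_le_mul_self (norm_nonneg (x - y)) hle
      nlinarith
    nlinarith
  have hmain := ERC.main_ineq hR hG hxy
  have hlower : ‖x - y‖ ≤ orbDist (coxeterGroup R) x y := by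
    apply le_ciInf
    intro σ
    have h1 := hmain σ
    have hnorm : ‖(σ : Euc N ≃ₗᵢ[ℝ] Euc N) y‖ = ‖y‖ := LinearIsometryEquiv.norm_map _ y
    have hsq : ‖x - y‖ ^ 2 ≤ ‖x - (σ : Euc N ≃ₗᵢ[ℝ] Euc N) y‖ ^ 2 := by
      rw [norm_sub_sq_real, norm_sub_sq_real, hnorm]
      linarith
    calc ‖x - y‖ = Real.sqrt (‖x - y‖ ^ 2) := (Real.sqrt_sq (norm_nonneg _)).symm
      _ ≤ Real.sqrt (‖x - (σ : Euc N ≃ₗᵢ[ℝ] Euc N) y‖ ^ 2) := Real.sqrt_le_sqrt hsq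
      _ = ‖x - (σ : Euc N ≃ₗᵢ[ℝ] Euc N) y‖ := Real.sqrt_sq (norm_nonneg _)
  linarith
end
end

section
/- With the notation above, for any x, y ∈ ℝ^N with d(x,y) < ‖x − y‖ there exist m with 1 ≤ m ≤ |G| and roots α₁, …, α_m ∈ R such that the sequence of distances strictly decreases: ‖x − y‖ > ‖x − σ_{α₁}(y)‖ > ‖x − σ_{α₂}∘σ_{α₁}(y)‖ > ⋯ > ‖x − σ_{α_m}∘⋯∘σ_{α₁}(y)‖, and the final point satisfies ‖x − σ_{α_m}∘⋯∘σ_{α₁}(y)‖ = d(x,y). -/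
open scoped RealInnerProductSpace
noncomputable section

/-- The iterated reflection points. -/
def chainPt {N : ℕ} (a : ℕ → Euc N) (y : Euc N) : ℕ → Euc N
  | 0 => y
  | j + 1 => sigmaRefl (a j) (chainPt a y j)

namespace ReflChain

open Finset

variable {N : ℕ}

local instance : DecidableEq (Euc N) := Classical.decEq _

/-! ### Basic facts about `sigmaRefl` -/

lemma inner_self_two {R : Finset (Euc N)} (hR : IsNormalizedRootSystem R) {α : Euc N}
    (hα : α ∈ R) : ⟪α, α⟫ = (2 : ℝ) := by
  have h := hR.norm_eq α hα
  rw [real_inner_self_eq_norm_sq, h, Real.sq_sqrt (by norm_num)]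

lemma root_ne_zero {R : Finset (Euc N)} (hR : IsNormalizedRootSystem R) {α : Euc N}
    (hα : α ∈ R) : α ≠ 0 := by
  rintro rfl; exact hR.ne_zero hα

lemma sigmaRefl_apply {α : Euc N} (hαα : ⟪α, α⟫ = (2 : ℝ)) (v : Euc N) :
    sigmaRefl α v = v - ⟪α, v⟫ • α := by
  have hα0 : α ≠ 0 := by
    rintro rfl; rw [inner_zero_left] at hαα; norm_num at hαα
  have hdecomp : v = (v - (⟪α, v⟫ / 2) • α) + (⟪α, v⟫ / 2) • α := by abel
  have hmem1 : v - (⟪α, v⟫ / 2) • α ∈ (ℝ ∙ α)ᗮ := by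
    rw [Submodule.mem_orthogonal_singleton_iff_inner_right]
    rw [inner_sub_right, real_inner_smul_right, hαα]
    ring
  have hmem2 : sigmaRefl α ((⟪α, v⟫ / 2) • α) = -((⟪α, v⟫ / 2) • α) := by
    rw [map_smul]
    have : sigmaRefl α α = -α := Submodule.reflection_orthogonalComplement_singleton_eq_neg α
    rw [this, smul_neg]
  calc sigmaRefl α v
      = sigmaRefl α ((v - (⟪α, v⟫ / 2) • α) + (⟪α, v⟫ / 2) • α) := by rw [← hdecomp]
    _ = sigmaRefl α (v - (⟪α, v⟫ / 2) • α) + sigmaRefl α ((⟪α, v⟫ / 2) • α) := map_add _ _ _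
    _ = (v - (⟪α, v⟫ / 2) • α) + -((⟪α, v⟫ / 2) • α) := by
        have hfix : sigmaRefl α (v - (⟪α, v⟫ / 2) • α) = v - (⟪α, v⟫ / 2) • α :=
          Submodule.reflection_mem_subspace_eq_self hmem1
        rw [hfix, hmem2]
    _ = v - ⟪α, v⟫ • α := by
        rw [← sub_eq_add_neg, sub_sub, ← add_smul,
          show ⟪α, v⟫ / 2 + ⟪α, v⟫ / 2 = ⟪α, v⟫ by ring]

lemma sigmaRefl_sigmaRefl (α v : Euc N) : sigmaRefl α (sigmaRefl α v) = v :=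
  Submodule.reflection_reflection _ v

lemma sigmaRefl_mul_self (α : Euc N) :
    (sigmaRefl α : Euc N ≃ₗᵢ[ℝ] Euc N) * sigmaRefl α = 1 := by
  refine LinearIsometryEquiv.ext fun v => ?_
  simp only [LinearIsometryEquiv.coe_mul, Function.comp_apply, LinearIsometryEquiv.coe_one,
    id_eq]
  exact sigmaRefl_sigmaRefl α v

lemma sigmaRefl_inv (α : Euc N) :
    (sigmaRefl α : Euc N ≃ₗᵢ[ℝ] Euc N)⁻¹ = sigmaRefl α :=
  inv_eq_of_mul_eq_one_right (sigmaRefl_mul_self α)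

lemma sigmaRefl_neg (α : Euc N) : sigmaRefl (-α) = sigmaRefl α := by
  unfold sigmaRefl
  congr 1
  rw [show (-α : Euc N) = (-1 : ℝ) • α by simp]
  exact congrArg _ (Submodule.span_singleton_smul_eq (by simp : IsUnit (-1 : ℝ)) α)

lemma sigma_conj (u : Euc N ≃ₗᵢ[ℝ] Euc N) {α : Euc N} (hαα : ⟪α, α⟫ = (2 : ℝ)) :
    (sigmaRefl (u α) : Euc N ≃ₗᵢ[ℝ] Euc N) = u * sigmaRefl α * u⁻¹ := by
  have hu : ⟪u α, u α⟫ = (2 : ℝ) := by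
    rw [LinearIsometryEquiv.inner_map_map]; exact hαα
  refine LinearIsometryEquiv.ext fun v => ?_
  simp only [LinearIsometryEquiv.coe_mul, Function.comp_apply, LinearIsometryEquiv.coe_inv]
  rw [sigmaRefl_apply hu, sigmaRefl_apply hαα, map_sub, map_smul,
    LinearIsometryEquiv.apply_symm_apply]
  have h : ⟪u α, v⟫ = ⟪α, u.symm v⟫ := by
    have h2 := u.inner_map_map α (u.symm v)
    rw [u.apply_symm_apply] at h2
    exact h2
  rw [h]

/-! ### Membership in the Coxeter group and stability of `R` -/

lemma sigma_mem_cox {R : Finset (Euc N)} {α : Euc N} (hα : α ∈ R) :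
    (sigmaRefl α : Euc N ≃ₗᵢ[ℝ] Euc N) ∈ coxeterGroup R :=
  Subgroup.subset_closure ⟨α, Finset.mem_coe.mpr hα, rfl⟩

lemma cox_maps_aux {R : Finset (Euc N)} (hR : IsNormalizedRootSystem R)
    {w : Euc N ≃ₗᵢ[ℝ] Euc N} (hw : w ∈ coxeterGroup R) :
    (∀ α ∈ R, w α ∈ R) ∧ (∀ α ∈ R, w⁻¹ α ∈ R) := by
  refine Subgroup.closure_induction ?_ ?_ ?_ ?_ hw
  · rintro g ⟨β, hβ, rfl⟩
    refine ⟨fun α hα => hR.refl_mem β (Finset.mem_coe.mp hβ) α hα, ?_⟩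
    rw [sigmaRefl_inv]
    exact fun α hα => hR.refl_mem β (Finset.mem_coe.mp hβ) α hα
  · constructor <;> intro α hα <;> simpa using hα
  · rintro g g' _ _ ⟨hg1, hg2⟩ ⟨hg'1, hg'2⟩
    constructor
    · intro α hα
      have : (g * g') α = g (g' α) := rfl
      rw [this]; exact hg1 _ (hg'1 _ hα)
    · intro α hα
      have : (g * g')⁻¹ α = g'⁻¹ (g⁻¹ α) := by
        rw [mul_inv_rev]; rfl
      rw [this]; exact hg'2 _ (hg2 _ hα)
  · rintro g _ ⟨hg1, hg2⟩
    exact ⟨hg2, by simpa using hg1⟩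

lemma cox_maps {R : Finset (Euc N)} (hR : IsNormalizedRootSystem R)
    {w : Euc N ≃ₗᵢ[ℝ] Euc N} (hw : w ∈ coxeterGroup R) {α : Euc N} (hα : α ∈ R) :
    w α ∈ R :=
  (cox_maps_aux hR hw).1 α hα


/-! ### Cones -/

/-- `v` is a nonnegative combination of the elements of `D`. -/
def InCone (D : Finset (Euc N)) (v : Euc N) : Prop :=
  ∃ c : Euc N → ℝ, (∀ γ, 0 ≤ c γ) ∧ v = ∑ γ ∈ D, c γ • γ

lemma InCone.zero (D : Finset (Euc N)) : InCone D 0 :=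
  ⟨fun _ => 0, fun _ => le_rfl, by simp⟩

lemma InCone.single {D : Finset (Euc N)} {γ : Euc N} (hγ : γ ∈ D) {t : ℝ} (ht : 0 ≤ t) :
    InCone D (t • γ) := by
  refine ⟨fun β => if β = γ then t else 0, fun β => by by_cases h : β = γ <;> simp [h, ht], ?_⟩
  rw [show (∑ β ∈ D, (if β = γ then t else 0) • β) = ∑ β ∈ D, (if β = γ then t • β else 0) by
    refine Finset.sum_congr rfl fun β _ => ?_; split <;> simp]
  rw [Finset.sum_ite_eq' D γ (fun β => t • β), if_pos hγ]

lemma InCone.mem {D : Finset (Euc N)} {γ : Euc N} (hγ : γ ∈ D) : InCone D γ := by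
  have := InCone.single hγ (zero_le_one (α := ℝ))
  rwa [one_smul] at this

lemma InCone.add {D : Finset (Euc N)} {v w : Euc N} (hv : InCone D v) (hw : InCone D w) :
    InCone D (v + w) := by
  obtain ⟨c, hc0, rfl⟩ := hv
  obtain ⟨d, hd0, rfl⟩ := hw
  refine ⟨fun γ => c γ + d γ, fun γ => add_nonneg (hc0 γ) (hd0 γ), ?_⟩
  rw [← Finset.sum_add_distrib]
  refine Finset.sum_congr rfl fun γ _ => ?_
  rw [add_smul]

lemma InCone.subst {D : Finset (Euc N)} {α v : Euc N} (hα : InCone (D.erase α) α)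
    (hv : InCone D v) : InCone (D.erase α) v := by
  by_cases hmem : α ∈ D
  · obtain ⟨a, ha0, haeq⟩ := hα
    obtain ⟨c, hc0, hceq⟩ := hv
    refine ⟨fun γ => c γ + c α * a γ,
      fun γ => add_nonneg (hc0 γ) (mul_nonneg (hc0 α) (ha0 γ)), ?_⟩
    calc v = (∑ γ ∈ D.erase α, c γ • γ) + c α • α := by
          rw [hceq, ← Finset.sum_erase_add D _ hmem]
      _ = (∑ γ ∈ D.erase α, c γ • γ) + c α • (∑ γ ∈ D.erase α, a γ • γ) :=
          congrArg (fun t => (∑ γ ∈ D.erase α, c γ • γ) + c α • t) haeq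
      _ = (∑ γ ∈ D.erase α, c γ • γ) + (∑ γ ∈ D.erase α, (c α * a γ) • γ) := by
          rw [Finset.smul_sum]
          congr 1
          exact Finset.sum_congr rfl fun γ _ => smul_smul _ _ _
      _ = ∑ γ ∈ D.erase α, (c γ + c α * a γ) • γ := by
          rw [← Finset.sum_add_distrib]
          exact Finset.sum_congr rfl fun γ _ => (add_smul _ _ _).symm
  · rw [Finset.erase_eq_of_notMem hmem] at hα ⊢
    exact hv

/-! ### Positive systems -/

/-- A context for the theory of positive/simple systems of a normalized root system:
a generic vector `v0` and a minimal-cardinality subset `Δ` of the positive roots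
whose cone contains all positive roots. -/
structure PosCtx (N : ℕ) where
  R : Finset (Euc N)
  hR : IsNormalizedRootSystem R
  v0 : Euc N
  gen : ∀ α ∈ R, ⟪v0, α⟫ ≠ (0 : ℝ)
  Δ : Finset (Euc N)
  hsub : Δ ⊆ R.filter fun α => 0 < ⟪v0, α⟫
  hgen : ∀ β ∈ R.filter (fun α => (0:ℝ) < ⟪v0, α⟫), InCone Δ β
  hmin : ∀ D ⊆ R.filter (fun α => (0:ℝ) < ⟪v0, α⟫),
    (∀ β ∈ R.filter (fun α => (0:ℝ) < ⟪v0, α⟫), InCone D β) → Δ.card ≤ D.card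

/-- The set of positive roots. -/
def PosCtx.Rp (C : PosCtx N) : Finset (Euc N) := C.R.filter fun α => 0 < ⟪C.v0, α⟫

namespace PosCtx

variable (C : PosCtx N)

lemma mem_Rp_iff {β : Euc N} : β ∈ C.Rp ↔ β ∈ C.R ∧ 0 < ⟪C.v0, β⟫ := Finset.mem_filter

lemma Rp_subset : C.Rp ⊆ C.R := Finset.filter_subset _ _

lemma Δ_subset_Rp : C.Δ ⊆ C.Rp := C.hsub

lemma Δ_subset_R : C.Δ ⊆ C.R := fun _ h => C.Rp_subset (C.hsub h)

lemma gen_Rp : ∀ β ∈ C.Rp, InCone C.Δ β := C.hgen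

lemma pos_of_Rp {β : Euc N} (hβ : β ∈ C.Rp) : 0 < ⟪C.v0, β⟫ := (C.mem_Rp_iff.mp hβ).2

lemma neg_root_Rp {β : Euc N} (hβ : β ∈ C.R) (hneg : ⟪C.v0, β⟫ < 0) : -β ∈ C.Rp := by
  rw [mem_Rp_iff, inner_neg_right]
  exact ⟨C.hR.neg_mem β hβ, by linarith⟩

lemma pos_or_neg {β : Euc N} (hβ : β ∈ C.R) : β ∈ C.Rp ∨ -β ∈ C.Rp := by
  rcases lt_or_gt_of_ne (C.gen β hβ) with h | h
  · exact Or.inr (C.neg_root_Rp hβ h)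
  · exact Or.inl (C.mem_Rp_iff.mpr ⟨hβ, h⟩)

lemma inner_self_two' {α : Euc N} (hα : α ∈ C.R) : ⟪α, α⟫ = (2:ℝ) := inner_self_two C.hR hα

/-- The key permutation lemma: a simple reflection permutes the other positive roots. -/
lemma perm {α β : Euc N} (hα : α ∈ C.Δ) (hβ : β ∈ C.Rp) (hne : β ≠ α) :
    sigmaRefl α β ∈ C.Rp := by
  classical
  have hαRp := C.Δ_subset_Rp hα
  have hαR := C.Rp_subset hαRp
  have hβR := C.Rp_subset hβ
  have hσR : sigmaRefl α β ∈ C.R := C.hR.refl_mem α hαR β hβR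
  rcases lt_or_gt_of_ne (C.gen _ hσR) with hneg | hpos
  swap
  · exact C.mem_Rp_iff.mpr ⟨hσR, hpos⟩
  exfalso
  obtain ⟨c, hc0, hcβ⟩ := C.gen_Rp β hβ
  have hδ : -(sigmaRefl α β) ∈ C.Rp := C.neg_root_Rp hσR hneg
  obtain ⟨d, hd0, hdδ⟩ := C.gen_Rp _ hδ
  set E : Euc N → ℝ := fun γ => c γ + d γ - (if γ = α then ⟪α, β⟫ else 0) with hE
  have hEval : ∀ γ, E γ = c γ + d γ - (if γ = α then ⟪α, β⟫ else 0) := fun γ => rfl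
  have happly : sigmaRefl α β = β - ⟪α, β⟫ • α := sigmaRefl_apply (C.inner_self_two' hαR) β
  have hsum : ∑ γ ∈ C.Δ, E γ • γ = 0 := by
    have h1 : ∑ γ ∈ C.Δ, (if γ = α then ⟪α, β⟫ else 0) • γ = ⟪α, β⟫ • α := by
      rw [show (∑ γ ∈ C.Δ, (if γ = α then ⟪α, β⟫ else 0) • γ)
          = ∑ γ ∈ C.Δ, (if γ = α then ⟪α, β⟫ • γ else 0) by
        refine Finset.sum_congr rfl fun γ _ => ?_; split <;> simp]
      rw [Finset.sum_ite_eq' C.Δ α (fun γ => ⟪α, β⟫ • γ), if_pos hα]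
    calc ∑ γ ∈ C.Δ, E γ • γ
        = (∑ γ ∈ C.Δ, c γ • γ) + (∑ γ ∈ C.Δ, d γ • γ)
          - ∑ γ ∈ C.Δ, (if γ = α then ⟪α, β⟫ else 0) • γ := by
          rw [← Finset.sum_add_distrib, ← Finset.sum_sub_distrib]
          refine Finset.sum_congr rfl fun γ _ => ?_
          rw [hEval γ, sub_smul, add_smul]
      _ = β + (-(sigmaRefl α β)) - ⟪α, β⟫ • α := by rw [← hcβ, ← hdδ, h1]
      _ = 0 := by rw [happly]; abel
  have hγ0 : ∃ γ₀ ∈ C.Δ, γ₀ ≠ α ∧ 0 < c γ₀ := by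
    by_contra hno
    push_neg at hno
    have hzero : ∀ γ ∈ C.Δ, γ ≠ α → c γ • γ = (0 : Euc N) := by
      intro γ hγ hγα
      have h1 := hno γ hγ hγα
      have h2 : c γ = 0 := le_antisymm h1 (hc0 γ)
      rw [h2, zero_smul]
    have hβval : β = c α • α := by
      rw [hcβ, Finset.sum_eq_single α (fun γ hγ hγα => hzero γ hγ hγα) (fun h => absurd hα h)]
    have hcases := C.hR.smul_mem α hαR (c α) (hβval ▸ hβR)
    rw [← hβval] at hcases
    rcases hcases with h | h
    · exact hne h
    · rw [h] at hβ
      have h1 := C.pos_of_Rp hβ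
      have h2 := C.pos_of_Rp hαRp
      rw [inner_neg_right] at h1
      linarith
  obtain ⟨γ₀, hγ₀Δ, hγ₀α, hγ₀pos⟩ := hγ0
  have hEnonneg : ∀ γ, γ ≠ α → 0 ≤ E γ := by
    intro γ hγα
    rw [hEval γ, if_neg hγα, sub_zero]
    have := hc0 γ; have := hd0 γ; linarith
  by_cases hEα : 0 ≤ E α
  · have h0 : (0:ℝ) = ∑ γ ∈ C.Δ, E γ * ⟪C.v0, γ⟫ := by
      have h := congrArg (fun t => ⟪C.v0, t⟫) hsum
      simp only [inner_sum, real_inner_smul_right, inner_zero_right] at h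
      linarith [h]
    have hterm : ∀ γ ∈ C.Δ, 0 ≤ E γ * ⟪C.v0, γ⟫ := by
      intro γ hγ
      have hpos := C.pos_of_Rp (C.Δ_subset_Rp hγ)
      by_cases hγα : γ = α
      · subst hγα; positivity
      · exact mul_nonneg (hEnonneg γ hγα) hpos.le
    have hγ₀term : 0 < E γ₀ * ⟪C.v0, γ₀⟫ := by
      have hpos := C.pos_of_Rp (C.Δ_subset_Rp hγ₀Δ)
      have : 0 < E γ₀ := by
        rw [hEval γ₀, if_neg hγ₀α, sub_zero]
        have := hd0 γ₀; linarith
      positivity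
    have hle := Finset.single_le_sum hterm hγ₀Δ
    linarith
  · push_neg at hEα
    have hrep : InCone (C.Δ.erase α) α := by
      refine ⟨fun γ => if γ = α then 0 else E γ / (-(E α)), ?_, ?_⟩
      · intro γ
        dsimp only
        by_cases hγα : γ = α
        · simp [hγα]
        · rw [if_neg hγα]
          exact div_nonneg (hEnonneg γ hγα) (by linarith)
      · have hsplit : (∑ γ ∈ C.Δ.erase α, E γ • γ) + E α • α = 0 := by
          rw [Finset.sum_erase_add C.Δ _ hα]; exact hsum
        have h2 : ∑ γ ∈ C.Δ.erase α, E γ • γ = (-(E α)) • α := by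
          rw [neg_smul]; linear_combination (norm := module) hsplit
        have hEα0 : -(E α) ≠ 0 := by linarith
        rw [show ∑ γ ∈ C.Δ.erase α, (if γ = α then 0 else E γ / (-(E α))) • γ
            = ∑ γ ∈ C.Δ.erase α, (E γ / (-(E α))) • γ by
          refine Finset.sum_congr rfl fun γ hγ => ?_
          rw [if_neg (Finset.ne_of_mem_erase hγ)]]
        rw [show ∀ (s : Finset (Euc N)), (∑ γ ∈ s, (E γ / (-(E α))) • γ)
            = (-(E α))⁻¹ • ∑ γ ∈ s, E γ • γ by
          intro s; rw [Finset.smul_sum]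
          refine Finset.sum_congr rfl fun γ _ => ?_
          rw [smul_smul, div_eq_inv_mul]]
        rw [h2, smul_smul, inv_mul_cancel₀ hEα0, one_smul]
    have hsubst : ∀ β' ∈ C.Rp, InCone (C.Δ.erase α) β' :=
      fun β' hβ' => InCone.subst hrep (C.gen_Rp β' hβ')
    have hcard := C.hmin (C.Δ.erase α)
      (Finset.Subset.trans (Finset.erase_subset _ _) C.hsub) hsubst
    rw [Finset.card_erase_of_mem hα] at hcard
    have : 0 < C.Δ.card := Finset.card_pos.mpr ⟨α, hα⟩
    omega

end PosCtx

/-! ### Words of reflections -/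

lemma gl_mul_apply (u v : Euc N ≃ₗᵢ[ℝ] Euc N) (p : Euc N) : (u * v) p = u (v p) := rfl

lemma sigmaRefl_self (α : Euc N) : sigmaRefl α α = -α :=
  Submodule.reflection_orthogonalComplement_singleton_eq_neg α

/-- The product of the reflections along the roots in `l` (in order). -/
def wprod (l : List (Euc N)) : Euc N ≃ₗᵢ[ℝ] Euc N :=
  (l.map fun γ => sigmaRefl γ).prod

@[simp] lemma wprod_nil : wprod ([] : List (Euc N)) = 1 := rfl

@[simp] lemma wprod_cons (γ : Euc N) (l : List (Euc N)) :
    wprod (γ :: l) = (sigmaRefl γ : Euc N ≃ₗᵢ[ℝ] Euc N) * wprod l := by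
  simp [wprod]

@[simp] lemma wprod_append (l₁ l₂ : List (Euc N)) :
    wprod (l₁ ++ l₂) = wprod l₁ * wprod l₂ := by
  simp [wprod]

@[simp] lemma wprod_singleton (γ : Euc N) :
    wprod [γ] = (sigmaRefl γ : Euc N ≃ₗᵢ[ℝ] Euc N) := by
  simp [wprod]

lemma wprod_mem_cox {R : Finset (Euc N)} {l : List (Euc N)} (hl : ∀ γ ∈ l, γ ∈ R) :
    wprod l ∈ coxeterGroup R := by
  induction l with
  | nil => exact one_mem _
  | cons γ l IH =>
    rw [wprod_cons]
    exact mul_mem (sigma_mem_cox (hl γ (by simp)))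
      (IH fun γ' hγ' => hl γ' (by simp [hγ']))

lemma wprod_maps {R : Finset (Euc N)} (hR : IsNormalizedRootSystem R) {l : List (Euc N)}
    (hl : ∀ γ ∈ l, γ ∈ R) : ∀ β ∈ R, wprod l β ∈ R :=
  fun β hβ => cox_maps hR (wprod_mem_cox hl) hβ

namespace PosCtx

variable (C : PosCtx N)

/-- The set of positive roots sent to negative roots by `w`. -/
def negSet (w : Euc N ≃ₗᵢ[ℝ] Euc N) : Finset (Euc N) :=
  C.Rp.filter fun β => ⟪C.v0, w β⟫ < 0

lemma mem_negSet_iff {w : Euc N ≃ₗᵢ[ℝ] Euc N} {β : Euc N} :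
    β ∈ C.negSet w ↔ β ∈ C.Rp ∧ ⟪C.v0, w β⟫ < 0 := Finset.mem_filter

lemma negSet_mul_eq_neg {w : Euc N ≃ₗᵢ[ℝ] Euc N} {α : Euc N} (hαΔ : α ∈ C.Δ)
    (hneg : ⟪C.v0, w α⟫ < 0) :
    C.negSet (w * sigmaRefl α) = ((C.negSet w).erase α).image (fun β => sigmaRefl α β) := by
  ext β
  rw [mem_negSet_iff]
  constructor
  · rintro ⟨hβRp, hlt⟩
    rw [gl_mul_apply] at hlt
    have hβα : β ≠ α := by
      rintro rfl
      rw [sigmaRefl_self, map_neg, inner_neg_right] at hlt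
      linarith
    have hγRp : sigmaRefl α β ∈ C.Rp := C.perm hαΔ hβRp hβα
    have hγα : sigmaRefl α β ≠ α := by
      intro h
      have : β = -α := by
        have := congrArg (fun t => sigmaRefl α t) h
        simp only [sigmaRefl_sigmaRefl] at this
        rw [this, sigmaRefl_self]
      rw [this] at hβRp
      have h1 := C.pos_of_Rp hβRp
      have h2 := C.pos_of_Rp (C.Δ_subset_Rp hαΔ)
      rw [inner_neg_right] at h1
      linarith
    refine Finset.mem_image.mpr ⟨sigmaRefl α β, Finset.mem_erase.mpr ⟨hγα, ?_⟩, ?_⟩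
    · exact C.mem_negSet_iff.mpr ⟨hγRp, hlt⟩
    · exact sigmaRefl_sigmaRefl α β
  · intro hβ
    obtain ⟨γ, hγ, rfl⟩ := Finset.mem_image.mp hβ
    obtain ⟨hγα, hγmem⟩ := Finset.mem_erase.mp hγ
    obtain ⟨hγRp, hγlt⟩ := C.mem_negSet_iff.mp hγmem
    refine ⟨C.perm hαΔ hγRp hγα, ?_⟩
    rw [gl_mul_apply, sigmaRefl_sigmaRefl]
    exact hγlt

lemma negSet_card_mul_neg {w : Euc N ≃ₗᵢ[ℝ] Euc N} {α : Euc N} (hαΔ : α ∈ C.Δ)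
    (hneg : ⟪C.v0, w α⟫ < 0) :
    (C.negSet (w * sigmaRefl α)).card = (C.negSet w).card - 1 := by
  rw [C.negSet_mul_eq_neg hαΔ hneg,
    Finset.card_image_of_injective _ (sigmaRefl α).injective,
    Finset.card_erase_of_mem (C.mem_negSet_iff.mpr ⟨C.Δ_subset_Rp hαΔ, hneg⟩)]

lemma negSet_mul_eq_pos {w : Euc N ≃ₗᵢ[ℝ] Euc N} {α : Euc N} (hαΔ : α ∈ C.Δ)
    (hpos : 0 < ⟪C.v0, w α⟫) :
    C.negSet (w * sigmaRefl α) = insert α ((C.negSet w).image (fun β => sigmaRefl α β)) := by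
  ext β
  rw [mem_negSet_iff]
  constructor
  · rintro ⟨hβRp, hlt⟩
    rw [gl_mul_apply] at hlt
    by_cases hβα : β = α
    · exact Finset.mem_insert.mpr (Or.inl hβα)
    · refine Finset.mem_insert.mpr (Or.inr (Finset.mem_image.mpr
        ⟨sigmaRefl α β, C.mem_negSet_iff.mpr ⟨C.perm hαΔ hβRp hβα, hlt⟩, sigmaRefl_sigmaRefl α β⟩))
  · intro hβ
    rcases Finset.mem_insert.mp hβ with rfl | hβ'
    · refine ⟨C.Δ_subset_Rp hαΔ, ?_⟩
      rw [gl_mul_apply, sigmaRefl_self, map_neg, inner_neg_right]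
      linarith
    · obtain ⟨γ, hγmem, rfl⟩ := Finset.mem_image.mp hβ'
      obtain ⟨hγRp, hγlt⟩ := C.mem_negSet_iff.mp hγmem
      have hγα : γ ≠ α := by
        rintro rfl
        linarith
      refine ⟨C.perm hαΔ hγRp hγα, ?_⟩
      rw [gl_mul_apply, sigmaRefl_sigmaRefl]
      exact hγlt

lemma negSet_card_mul_pos {w : Euc N ≃ₗᵢ[ℝ] Euc N} {α : Euc N} (hαΔ : α ∈ C.Δ)
    (hpos : 0 < ⟪C.v0, w α⟫) :
    (C.negSet (w * sigmaRefl α)).card = (C.negSet w).card + 1 := by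
  rw [C.negSet_mul_eq_pos hαΔ hpos]
  have hnotmem : α ∉ (C.negSet w).image (fun β => sigmaRefl α β) := by
    intro h
    obtain ⟨γ, hγmem, hγeq⟩ := Finset.mem_image.mp h
    obtain ⟨hγRp, _⟩ := C.mem_negSet_iff.mp hγmem
    have : γ = -α := by
      have := congrArg (fun t => sigmaRefl α t) hγeq
      simp only [sigmaRefl_sigmaRefl] at this
      rw [this, sigmaRefl_self]
    rw [this] at hγRp
    have h1 := C.pos_of_Rp hγRp
    have h2 := C.pos_of_Rp (C.Δ_subset_Rp hαΔ)
    rw [inner_neg_right] at h1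
    linarith
  rw [Finset.card_insert_of_notMem hnotmem,
    Finset.card_image_of_injective _ (sigmaRefl α).injective]

/-! ### Generation by simple reflections -/

/-- The subgroup generated by the simple reflections. -/
def simpleGroup : Subgroup (Euc N ≃ₗᵢ[ℝ] Euc N) :=
  Subgroup.closure ((fun γ => sigmaRefl γ) '' (C.Δ : Set (Euc N)))

lemma sigma_mem_simpleGroup : ∀ β ∈ C.R,
    (sigmaRefl β : Euc N ≃ₗᵢ[ℝ] Euc N) ∈ C.simpleGroup := by
  have hpos : ∀ n : ℕ, ∀ β ∈ C.Rp,
      (C.Rp.filter fun γ => ⟪C.v0, γ⟫ < ⟪C.v0, β⟫).card ≤ n →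
      (sigmaRefl β : Euc N ≃ₗᵢ[ℝ] Euc N) ∈ C.simpleGroup := by
    intro n
    induction n using Nat.strong_induction_on with
    | _ n IH =>
    intro β hβ hcard
    by_cases hβΔ : β ∈ C.Δ
    · exact Subgroup.subset_closure ⟨β, Finset.mem_coe.mpr hβΔ, rfl⟩
    · have hβR : β ∈ C.R := C.Rp_subset hβ
      obtain ⟨c, hc0, hcβ⟩ := C.gen_Rp β hβ
      have h2 : (0:ℝ) < ∑ γ ∈ C.Δ, c γ * ⟪β, γ⟫ := by
        have h := congrArg (fun t => ⟪β, t⟫) hcβ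
        simp only [inner_sum, real_inner_smul_right] at h
        rw [← h, C.inner_self_two' hβR]
        norm_num
      have hex : ∃ γ ∈ C.Δ, 0 < c γ * ⟪β, γ⟫ := by
        by_contra hno
        push_neg at hno
        have := Finset.sum_nonpos hno
        linarith
      obtain ⟨γ, hγΔ, hterm⟩ := hex
      have hγR : γ ∈ C.R := C.Δ_subset_R hγΔ
      have hγβpos : 0 < ⟪β, γ⟫ := by
        rcases le_or_gt ⟪β, γ⟫ 0 with h | h
        · nlinarith [hc0 γ]
        · exact h
      have hβγ : β ≠ γ := fun h => hβΔ (h ▸ hγΔ)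
      set β' := sigmaRefl γ β with hβ'def
      have hβ'Rp : β' ∈ C.Rp := C.perm hγΔ hβ hβγ
      have hβ'R : β' ∈ C.R := C.Rp_subset hβ'Rp
      have hβ'val : ⟪C.v0, β'⟫ = ⟪C.v0, β⟫ - ⟪γ, β⟫ * ⟪C.v0, γ⟫ := by
        rw [hβ'def, sigmaRefl_apply (C.inner_self_two' hγR), inner_sub_right,
          real_inner_smul_right]
      have hβ'lt : ⟪C.v0, β'⟫ < ⟪C.v0, β⟫ := by
        have hγpos := C.pos_of_Rp (C.Δ_subset_Rp hγΔ)
        rw [hβ'val]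
        nlinarith [real_inner_comm γ β]
      have hsubset : (C.Rp.filter fun δ => ⟪C.v0, δ⟫ < ⟪C.v0, β'⟫) ⊂
          (C.Rp.filter fun δ => ⟪C.v0, δ⟫ < ⟪C.v0, β⟫) := by
        constructor
        · intro δ hδ
          rw [Finset.mem_filter] at hδ ⊢
          exact ⟨hδ.1, lt_trans hδ.2 hβ'lt⟩
        · intro hsub
          have hβ'mem : β' ∈ C.Rp.filter fun δ => ⟪C.v0, δ⟫ < ⟪C.v0, β⟫ :=
            Finset.mem_filter.mpr ⟨hβ'Rp, hβ'lt⟩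
          have := hsub hβ'mem
          rw [Finset.mem_filter] at this
          exact lt_irrefl _ this.2
      have hcard' : (C.Rp.filter fun δ => ⟪C.v0, δ⟫ < ⟪C.v0, β'⟫).card <
          (C.Rp.filter fun δ => ⟪C.v0, δ⟫ < ⟪C.v0, β⟫).card :=
        Finset.card_lt_card hsubset
      have hIH := IH ((C.Rp.filter fun δ => ⟪C.v0, δ⟫ < ⟪C.v0, β'⟫).card)
        (by omega) β' hβ'Rp le_rfl
      have hββ' : β = sigmaRefl γ β' := by rw [hβ'def, sigmaRefl_sigmaRefl]
      have hconj : (sigmaRefl β : Euc N ≃ₗᵢ[ℝ] Euc N)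
          = sigmaRefl γ * sigmaRefl β' * (sigmaRefl γ : Euc N ≃ₗᵢ[ℝ] Euc N)⁻¹ := by
        rw [hββ']
        exact sigma_conj (sigmaRefl γ) (C.inner_self_two' hβ'R)
      rw [hconj]
      have hγmem : (sigmaRefl γ : Euc N ≃ₗᵢ[ℝ] Euc N) ∈ C.simpleGroup :=
        Subgroup.subset_closure ⟨γ, Finset.mem_coe.mpr hγΔ, rfl⟩
      exact mul_mem (mul_mem hγmem hIH) (inv_mem hγmem)
  intro β hβ
  rcases C.pos_or_neg hβ with h | h
  · exact hpos _ β h le_rfl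
  · rw [← sigmaRefl_neg β]
    exact hpos _ (-β) h le_rfl

lemma exists_word {w : Euc N ≃ₗᵢ[ℝ] Euc N} (hw : w ∈ coxeterGroup C.R) :
    ∃ l : List (Euc N), (∀ γ ∈ l, γ ∈ C.Δ) ∧ wprod l = w := by
  have hle : coxeterGroup C.R ≤ C.simpleGroup := by
    rw [coxeterGroup, Subgroup.closure_le]
    rintro g ⟨β, hβ, rfl⟩
    exact C.sigma_mem_simpleGroup β (Finset.mem_coe.mp hβ)
  have hw' : w ∈ Submonoid.closure
      (((fun γ => (sigmaRefl γ : Euc N ≃ₗᵢ[ℝ] Euc N)) '' (C.Δ : Set (Euc N)))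
        ∪ ((fun γ => (sigmaRefl γ : Euc N ≃ₗᵢ[ℝ] Euc N)) '' (C.Δ : Set (Euc N)))⁻¹) := by
    rw [← Subgroup.closure_toSubmonoid]
    exact hle hw
  obtain ⟨l, hl, hprod⟩ := Submonoid.exists_list_of_mem_closure hw'
  suffices haux : ∀ L : List (Euc N ≃ₗᵢ[ℝ] Euc N),
      (∀ u ∈ L, u ∈ ((fun γ => (sigmaRefl γ : Euc N ≃ₗᵢ[ℝ] Euc N)) '' (C.Δ : Set (Euc N)))
        ∪ ((fun γ => (sigmaRefl γ : Euc N ≃ₗᵢ[ℝ] Euc N)) '' (C.Δ : Set (Euc N)))⁻¹) →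
      ∃ lr : List (Euc N), (∀ γ ∈ lr, γ ∈ C.Δ) ∧ wprod lr = L.prod by
    obtain ⟨lr, h1, h2⟩ := haux l hl
    exact ⟨lr, h1, by rw [h2, hprod]⟩
  intro L
  induction L with
  | nil => exact fun _ => ⟨[], by simp, by simp⟩
  | cons u L IH =>
    intro hmem
    obtain ⟨lr, h1, h2⟩ := IH fun u' hu' => hmem u' (by simp [hu'])
    have hu := hmem u (by simp)
    have hu' : ∃ γ ∈ C.Δ, (sigmaRefl γ : Euc N ≃ₗᵢ[ℝ] Euc N) = u := by
      rcases hu with h | h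
      · obtain ⟨γ, hγ, hγeq⟩ := h
        exact ⟨γ, Finset.mem_coe.mp hγ, hγeq⟩
      · rw [Set.mem_inv] at h
        obtain ⟨γ, hγ, hγeq⟩ := h
        refine ⟨γ, Finset.mem_coe.mp hγ, ?_⟩
        rw [← inv_inv u, ← hγeq, sigmaRefl_inv]
    obtain ⟨γ, hγΔ, hγeq⟩ := hu'
    refine ⟨γ :: lr, ?_, ?_⟩
    · intro γ' hγ'
      rcases List.mem_cons.mp hγ' with rfl | h
      · exact hγΔ
      · exact h1 γ' h
    · rw [wprod_cons, h2, List.prod_cons, hγeq]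

/-! ### The deletion argument -/

lemma descent_exists : ∀ l : List (Euc N), (∀ γ ∈ l, γ ∈ C.Δ) →
    (C.negSet (wprod l)).card < l.length →
    ∃ (l₁ : List (Euc N)) (α : Euc N) (l₂ : List (Euc N)),
      l = l₁ ++ α :: l₂ ∧ α ∈ C.Δ ∧ ⟪C.v0, wprod l₁ α⟫ < 0 := by
  intro l
  induction l using List.reverseRecOn with
  | nil => intro _ h; simp at h
  | append_singleton l' α IH =>
    intro hmem hcard
    have hαΔ : α ∈ C.Δ := hmem α (by simp)
    have hαR : α ∈ C.R := C.Δ_subset_R hαΔ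
    have hl'mem : ∀ γ ∈ l', γ ∈ C.Δ := fun γ hγ => hmem γ (by simp [hγ])
    have hu : wprod l' α ∈ C.R :=
      wprod_maps C.hR (fun γ hγ => C.Δ_subset_R (hl'mem γ hγ)) α hαR
    rcases lt_or_gt_of_ne (C.gen _ hu) with hneg | hpos
    · exact ⟨l', α, [], by simp, hαΔ, hneg⟩
    · have heq : wprod (l' ++ [α]) = wprod l' * sigmaRefl α := by simp
      rw [heq, C.negSet_card_mul_pos hαΔ hpos] at hcard
      rw [List.length_append, List.length_singleton] at hcard
      obtain ⟨l₁, β, l₂, heq2, hβ, hlt⟩ := IH hl'mem (by omega)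
      exact ⟨l₁, β, l₂ ++ [α], by rw [heq2]; simp, hβ, hlt⟩

lemma cross_exists : ∀ l : List (Euc N), (∀ γ ∈ l, γ ∈ C.Δ) → ∀ τ ∈ C.Rp,
    ⟪C.v0, wprod l τ⟫ < 0 →
    ∃ (a : List (Euc N)) (γ : Euc N) (b : List (Euc N)),
      l = a ++ γ :: b ∧ (sigmaRefl γ : Euc N ≃ₗᵢ[ℝ] Euc N) = sigmaRefl (wprod b τ) := by
  intro l
  induction l using List.reverseRecOn with
  | nil =>
    intro _ τ hτ hlt
    have := C.pos_of_Rp hτ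
    have h1 : wprod ([] : List (Euc N)) τ = τ := rfl
    rw [h1] at hlt
    linarith
  | append_singleton l' γ' IH =>
    intro hmem τ hτ hlt
    have hγ'Δ : γ' ∈ C.Δ := hmem γ' (by simp)
    have hl'mem : ∀ γ ∈ l', γ ∈ C.Δ := fun γ hγ => hmem γ (by simp [hγ])
    have happ : wprod (l' ++ [γ']) τ = wprod l' (sigmaRefl γ' τ) := by
      rw [wprod_append, wprod_singleton, gl_mul_apply]
    by_cases hτγ : τ = γ'
    · refine ⟨l', γ', [], rfl, ?_⟩
      subst hτγ
      have h1 : wprod ([] : List (Euc N)) τ = τ := rfl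
      rw [h1]
    · have hτ' : sigmaRefl γ' τ ∈ C.Rp := C.perm hγ'Δ hτ hτγ
      rw [happ] at hlt
      obtain ⟨a, γ, b, heq, hσ⟩ := IH hl'mem (sigmaRefl γ' τ) hτ' hlt
      refine ⟨a, γ, b ++ [γ'], by rw [heq]; simp, ?_⟩
      rw [hσ]
      congr 1
      rw [wprod_append, wprod_singleton, gl_mul_apply]

lemma word_one : ∀ (n : ℕ) (l : List (Euc N)), l.length = n → (∀ γ ∈ l, γ ∈ C.Δ) →
    C.negSet (wprod l) = ∅ → wprod l = 1 := by
  intro n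
  induction n using Nat.strong_induction_on with
  | _ n IH =>
  intro l hlen hmem hempty
  by_cases hnil : l = []
  · subst hnil; rfl
  · have hlenpos : 0 < l.length := List.length_pos_iff.mpr hnil
    obtain ⟨l₁, α, l₂, heq, hαΔ, hneg⟩ := C.descent_exists l hmem (by
      rw [hempty, Finset.card_empty]; omega)
    have hl₁mem : ∀ γ ∈ l₁, γ ∈ C.Δ := fun γ hγ => hmem γ (by rw [heq]; simp [hγ])
    have hαRp : α ∈ C.Rp := C.Δ_subset_Rp hαΔ
    have hαR : α ∈ C.R := C.Rp_subset hαRp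
    obtain ⟨a, γ, b, heq2, hσ⟩ := C.cross_exists l₁ hl₁mem α hαRp hneg
    have hconj : (sigmaRefl γ : Euc N ≃ₗᵢ[ℝ] Euc N)
        = wprod b * sigmaRefl α * (wprod b)⁻¹ := by
      rw [hσ]
      exact sigma_conj (wprod b) (C.inner_self_two' hαR)
    have hss : ∀ u : Euc N ≃ₗᵢ[ℝ] Euc N,
        (sigmaRefl α : Euc N ≃ₗᵢ[ℝ] Euc N) * ((sigmaRefl α : Euc N ≃ₗᵢ[ℝ] Euc N) * u) = u :=
      fun u => by rw [← mul_assoc, sigmaRefl_mul_self, one_mul]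
    have hkey : wprod l = wprod (a ++ b ++ l₂) := by
      rw [heq, heq2]
      simp only [wprod_append, wprod_cons, mul_assoc]
      rw [hconj]
      simp only [mul_assoc]
      rw [inv_mul_cancel_left, hss]
    have hmem' : ∀ γ' ∈ a ++ b ++ l₂, γ' ∈ C.Δ := by
      intro γ' hγ'
      apply hmem
      rw [heq, heq2]
      simp only [List.mem_append, List.mem_cons] at hγ' ⊢
      tauto
    have hlen2 : (a ++ b ++ l₂).length + 2 = n := by
      rw [← hlen, heq, heq2]
      simp only [List.length_append, List.length_cons]
      omega
    have hres := IH ((a ++ b ++ l₂).length) (by omega) (a ++ b ++ l₂) rfl hmem'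
      (by rw [← hkey]; exact hempty)
    rw [hkey, hres]

lemma negSet_empty_eq_one {w : Euc N ≃ₗᵢ[ℝ] Euc N} (hw : w ∈ coxeterGroup C.R)
    (hempty : C.negSet w = ∅) : w = 1 := by
  obtain ⟨l, hl, hprod⟩ := C.exists_word hw
  rw [← hprod]
  exact C.word_one l.length l rfl hl (by rw [hprod]; exact hempty)

/-! ### The fundamental-domain inequality -/

lemma factF {y : Euc N} (hy : ∀ β ∈ C.Rp, 0 ≤ ⟪β, y⟫) :
    ∀ w : Euc N ≃ₗᵢ[ℝ] Euc N, w ∈ coxeterGroup C.R → InCone C.Rp (y - w y) := by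
  suffices H : ∀ (n : ℕ) (w : Euc N ≃ₗᵢ[ℝ] Euc N), w ∈ coxeterGroup C.R →
      (C.negSet w).card = n → InCone C.Rp (y - w y) by
    exact fun w hw => H _ w hw rfl
  intro n
  induction n using Nat.strong_induction_on with
  | _ n IH =>
  intro w hwG hcard
  by_cases hex : ∃ α ∈ C.Δ, ⟪C.v0, w α⟫ < 0
  · obtain ⟨α, hαΔ, hneg⟩ := hex
    have hαR : α ∈ C.R := C.Δ_subset_R hαΔ
    have hαmem : α ∈ C.negSet w := C.mem_negSet_iff.mpr ⟨C.Δ_subset_Rp hαΔ, hneg⟩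
    have hposcard : 0 < (C.negSet w).card := Finset.card_pos.mpr ⟨α, hαmem⟩
    have hw'G : w * sigmaRefl α ∈ coxeterGroup C.R := mul_mem hwG (sigma_mem_cox hαR)
    have hcount := C.negSet_card_mul_neg hαΔ hneg
    have hIH := IH ((C.negSet w).card - 1) (by omega) (w * sigmaRefl α) hw'G hcount
    have halg : y - w y = (y - (w * sigmaRefl α) y) + ⟪α, y⟫ • (-(w α)) := by
      have h1 : (w * sigmaRefl α) y = w y - ⟪α, y⟫ • (w α) := by
        rw [gl_mul_apply, sigmaRefl_apply (C.inner_self_two' hαR), map_sub, map_smul]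
      rw [h1]
      module
    rw [halg]
    refine InCone.add hIH (InCone.single ?_ (hy α (C.Δ_subset_Rp hαΔ)))
    exact C.neg_root_Rp (cox_maps C.hR hwG hαR) hneg
  · push_neg at hex
    have hempty : C.negSet w = ∅ := by
      rw [Finset.eq_empty_iff_forall_notMem]
      intro β hβ
      obtain ⟨hβRp, hβneg⟩ := C.mem_negSet_iff.mp hβ
      obtain ⟨c, hc0, hcβ⟩ := C.gen_Rp β hβRp
      have hwβ : w β = ∑ γ ∈ C.Δ, c γ • (w γ) := by
        rw [hcβ]
        simp [map_sum, map_smul]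
      have hval : ⟪C.v0, w β⟫ = ∑ γ ∈ C.Δ, c γ * ⟪C.v0, w γ⟫ := by
        rw [hwβ, inner_sum]
        exact Finset.sum_congr rfl fun γ _ => real_inner_smul_right _ _ _
      have hnn : 0 ≤ ⟪C.v0, w β⟫ := by
        rw [hval]
        exact Finset.sum_nonneg fun γ hγ => mul_nonneg (hc0 γ) (hex γ hγ)
      linarith
    have hone := C.negSet_empty_eq_one hwG hempty
    rw [hone]
    have : y - (1 : Euc N ≃ₗᵢ[ℝ] Euc N) y = 0 := by
      have h1 : (1 : Euc N ≃ₗᵢ[ℝ] Euc N) y = y := rfl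
      rw [h1, sub_self]
    rw [this]
    exact InCone.zero C.Rp

end PosCtx

/-! ### Construction of an adapted generic vector -/

lemma exists_generic_vec (S : Finset (Euc N)) (h0 : (0 : Euc N) ∉ S) :
    ∃ ξ : Euc N, ∀ α ∈ S, ⟪ξ, α⟫ ≠ 0 := by
  induction S using Finset.induction_on with
  | empty => exact ⟨0, by simp⟩
  | insert α S' hα IH =>
    have h0S : (0 : Euc N) ∉ S' := fun h => h0 (Finset.mem_insert_of_mem h)
    have hα0 : α ≠ (0 : Euc N) := by
      rintro rfl
      exact h0 (Finset.mem_insert_self _ _)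
    obtain ⟨ξ, hξ⟩ := IH h0S
    obtain ⟨t, ht⟩ := Infinite.exists_notMem_finset
      ((insert α S').image fun β => -⟪ξ, β⟫ / ⟪α, β⟫)
    refine ⟨ξ + t • α, ?_⟩
    intro β hβ
    rw [inner_add_left, real_inner_smul_left]
    by_cases hab : ⟪α, β⟫ = 0
    · rw [hab, mul_zero, add_zero]
      rcases Finset.mem_insert.mp hβ with rfl | hβ'
      · exact absurd (inner_self_eq_zero.mp hab) hα0
      · exact hξ β hβ'
    · intro hcontra
      apply ht
      refine Finset.mem_image.mpr ⟨β, hβ, ?_⟩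
      rw [div_eq_iff hab]
      linarith
/-- Existence of a generic vector adapted to the pair `(x, y)`. -/
lemma exists_adapted (R : Finset (Euc N)) (hR : IsNormalizedRootSystem R) (x y : Euc N)
    (hS : ∀ α ∈ R, 0 ≤ ⟪α, x⟫ * ⟪α, y⟫) :
    ∃ v₀ : Euc N, (∀ α ∈ R, ⟪v₀, α⟫ ≠ 0) ∧
      (∀ α ∈ R, 0 < ⟪v₀, α⟫ → 0 ≤ ⟪α, y⟫ ∧ 0 ≤ ⟪α, x⟫) := by
  obtain ⟨ξ, hξ⟩ := exists_generic_vec (R.filter fun α => ⟪y, α⟫ = 0 ∧ ⟪x, α⟫ = 0)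
    (fun h => hR.ne_zero (Finset.mem_filter.mp h).1)
  set B : Euc N → ℝ := fun α =>
    if ⟪y, α⟫ ≠ 0 then (|⟪x, α⟫| + |⟪ξ, α⟫|) / |⟪y, α⟫|
    else if ⟪x, α⟫ ≠ 0 then |⟪ξ, α⟫| / |⟪x, α⟫| else 0 with hB
  have hBval : ∀ α, B α =
      if ⟪y, α⟫ ≠ 0 then (|⟪x, α⟫| + |⟪ξ, α⟫|) / |⟪y, α⟫|
      else if ⟪x, α⟫ ≠ 0 then |⟪ξ, α⟫| / |⟪x, α⟫| else 0 := fun _ => rfl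
  have hB0 : ∀ α, 0 ≤ B α := by
    intro α
    rw [hBval α]
    split
    · positivity
    · split
      · positivity
      · exact le_rfl
  set M : ℝ := 1 + ∑ α ∈ R, B α with hM
  have hM1 : 1 ≤ M := by
    have : 0 ≤ ∑ α ∈ R, B α := Finset.sum_nonneg fun α _ => hB0 α
    rw [hM]; linarith
  have hM0 : 0 < M := by linarith
  have hMB : ∀ α ∈ R, B α < M := by
    intro α hα
    have h1 := Finset.single_le_sum (fun β _ => hB0 β) hα
    rw [hM]; linarith
  refine ⟨(M^2) • y + M • x + ξ, ?_⟩
  have hval : ∀ α : Euc N,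
      ⟪(M^2) • y + M • x + ξ, α⟫ = M^2 * ⟪y, α⟫ + M * ⟪x, α⟫ + ⟪ξ, α⟫ := by
    intro α
    rw [inner_add_left, inner_add_left, real_inner_smul_left, real_inner_smul_left]
  have hmain : ∀ α ∈ R, (⟪(M^2) • y + M • x + ξ, α⟫ ≠ 0) ∧
      (0 < ⟪(M^2) • y + M • x + ξ, α⟫ → 0 ≤ ⟪α, y⟫ ∧ 0 ≤ ⟪α, x⟫) := by
    intro α hα
    have hcy : ⟪α, y⟫ = ⟪y, α⟫ := real_inner_comm _ _
    have hcx : ⟪α, x⟫ = ⟪x, α⟫ := real_inner_comm _ _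
    rw [hval α]
    by_cases hya : ⟪y, α⟫ ≠ 0
    · have hBα : B α = (|⟪x, α⟫| + |⟪ξ, α⟫|) / |⟪y, α⟫| := by rw [hBval α, if_pos hya]
      have h1 : |⟪x, α⟫| + |⟪ξ, α⟫| < M * |⟪y, α⟫| := by
        have h2 := hMB α hα
        rw [hBα] at h2
        exact (div_lt_iff₀ (abs_pos.mpr hya)).mp h2
      have h2 : |M * ⟪x, α⟫ + ⟪ξ, α⟫| < M^2 * |⟪y, α⟫| := by
        calc |M * ⟪x, α⟫ + ⟪ξ, α⟫| ≤ |M * ⟪x, α⟫| + |⟪ξ, α⟫| := abs_add_le _ _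
          _ = M * |⟪x, α⟫| + |⟪ξ, α⟫| := by rw [abs_mul, abs_of_pos hM0]
          _ ≤ M * |⟪x, α⟫| + M * |⟪ξ, α⟫| := by nlinarith [abs_nonneg (⟪ξ, α⟫ : ℝ)]
          _ = M * (|⟪x, α⟫| + |⟪ξ, α⟫|) := by ring
          _ < M * (M * |⟪y, α⟫|) := mul_lt_mul_of_pos_left h1 hM0
          _ = M^2 * |⟪y, α⟫| := by ring
      rcases lt_or_gt_of_ne hya with hneg | hpos
      · have habs : |⟪y, α⟫| = -⟪y, α⟫ := abs_of_neg hneg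
        have h3 : M * ⟪x, α⟫ + ⟪ξ, α⟫ ≤ |M * ⟪x, α⟫ + ⟪ξ, α⟫| := le_abs_self _
        constructor
        · intro h
          nlinarith
        · intro h
          exfalso
          nlinarith
      · have habs : |⟪y, α⟫| = ⟪y, α⟫ := abs_of_pos hpos
        have h3 : -(M * ⟪x, α⟫ + ⟪ξ, α⟫) ≤ |M * ⟪x, α⟫ + ⟪ξ, α⟫| := neg_le_abs _
        have hfpos : 0 < M^2 * ⟪y, α⟫ + M * ⟪x, α⟫ + ⟪ξ, α⟫ := by nlinarith
        refine ⟨by linarith, fun _ => ⟨by rw [hcy]; linarith, ?_⟩⟩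
        have h4 := hS α hα
        rw [hcy, hcx] at h4
        rw [hcx]
        by_contra h5
        push_neg at h5
        nlinarith
    · push_neg at hya
      rw [hya, mul_zero, zero_add]
      by_cases hxa : ⟪x, α⟫ ≠ 0
      · have hBα : B α = |⟪ξ, α⟫| / |⟪x, α⟫| := by
          rw [hBval α, if_neg (by simpa using hya), if_pos hxa]
        have h1 : |⟪ξ, α⟫| < M * |⟪x, α⟫| := by
          have h2 := hMB α hα
          rw [hBα] at h2
          exact (div_lt_iff₀ (abs_pos.mpr hxa)).mp h2
        rcases lt_or_gt_of_ne hxa with hneg | hpos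
        · have habs : |⟪x, α⟫| = -⟪x, α⟫ := abs_of_neg hneg
          have h3 : ⟪ξ, α⟫ ≤ |⟪ξ, α⟫| := le_abs_self _
          constructor
          · intro h
            nlinarith
          · intro h
            exfalso
            nlinarith
        · have habs : |⟪x, α⟫| = ⟪x, α⟫ := abs_of_pos hpos
          have h3 : -⟪ξ, α⟫ ≤ |⟪ξ, α⟫| := neg_le_abs _
          have hfpos : 0 < M * ⟪x, α⟫ + ⟪ξ, α⟫ := by nlinarith
          exact ⟨by linarith, fun _ => ⟨by rw [hcy, hya], by rw [hcx]; linarith⟩⟩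
      · push_neg at hxa
        rw [hxa, mul_zero, zero_add]
        have hmem : α ∈ R.filter fun α => ⟪y, α⟫ = 0 ∧ ⟪x, α⟫ = 0 :=
          Finset.mem_filter.mpr ⟨hα, hya, hxa⟩
        exact ⟨hξ α hmem, fun _ => ⟨by rw [hcy, hya], by rw [hcx, hxa]⟩⟩
  exact ⟨fun α hα => (hmain α hα).1, fun α hα => (hmain α hα).2⟩

/-- Existence of a simple system: a minimal-cardinality positively-generating subset. -/
lemma exists_simple (R : Finset (Euc N)) (v₀ : Euc N) :
    ∃ Δ : Finset (Euc N), Δ ⊆ R.filter (fun α => (0:ℝ) < ⟪v₀, α⟫) ∧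
      (∀ β ∈ R.filter (fun α => (0:ℝ) < ⟪v₀, α⟫), InCone Δ β) ∧
      (∀ D ⊆ R.filter (fun α => (0:ℝ) < ⟪v₀, α⟫),
        (∀ β ∈ R.filter (fun α => (0:ℝ) < ⟪v₀, α⟫), InCone D β) → Δ.card ≤ D.card) := by
  classical
  set Rp := R.filter (fun α => (0:ℝ) < ⟪v₀, α⟫) with hRp
  set P := Rp.powerset.filter (fun D => ∀ β ∈ Rp, InCone D β) with hP
  have hPne : P.Nonempty := by
    refine ⟨Rp, Finset.mem_filter.mpr ⟨Finset.mem_powerset_self _, ?_⟩⟩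
    exact fun β hβ => InCone.mem hβ
  obtain ⟨Δ, hΔP, hΔmin⟩ := P.exists_min_image Finset.card hPne
  obtain ⟨hΔpow, hΔgen⟩ := Finset.mem_filter.mp hΔP
  refine ⟨Δ, Finset.mem_powerset.mp hΔpow, hΔgen, ?_⟩
  intro D hD1 hD2
  exact hΔmin D (Finset.mem_filter.mpr ⟨Finset.mem_powerset.mpr hD1, hD2⟩)

/-- The fundamental inequality: if no root strictly separates `x` and `y`,
then `y` maximizes `⟪x, ·⟫` on its orbit. -/
lemma claimC (R : Finset (Euc N)) (hR : IsNormalizedRootSystem R) (x y : Euc N)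
    (hS : ∀ α ∈ R, 0 ≤ ⟪α, x⟫ * ⟪α, y⟫) :
    ∀ w : Euc N ≃ₗᵢ[ℝ] Euc N, w ∈ coxeterGroup R → ⟪x, w y⟫ ≤ ⟪x, y⟫ := by
  obtain ⟨v₀, hgen, hsign⟩ := exists_adapted R hR x y hS
  obtain ⟨Δ, hsub, hg, hmin⟩ := exists_simple R v₀
  let C : PosCtx N := ⟨R, hR, v₀, hgen, Δ, hsub, hg, hmin⟩
  intro w hw
  have hy : ∀ β ∈ C.Rp, 0 ≤ ⟪β, y⟫ := by
    intro β hβ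
    have h1 := C.mem_Rp_iff.mp hβ
    exact (hsign β h1.1 h1.2).1
  obtain ⟨c, hc0, hceq⟩ := C.factF hy w hw
  have hx : ∀ β ∈ C.Rp, 0 ≤ ⟪x, β⟫ := by
    intro β hβ
    have h1 := C.mem_Rp_iff.mp hβ
    have h2 := (hsign β h1.1 h1.2).2
    rw [real_inner_comm] at h2
    exact h2
  have hnn : 0 ≤ ⟪x, y - w y⟫ := by
    rw [hceq, inner_sum]
    refine Finset.sum_nonneg fun β hβ => ?_
    rw [real_inner_smul_right]
    exact mul_nonneg (hc0 β) (hx β hβ)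
  rw [inner_sub_right] at hnn
  linarith

/-! ### Geometry of reflections and distances -/

lemma norm_sub_sigma_sq {α : Euc N} (hαα : ⟪α, α⟫ = (2:ℝ)) (x y : Euc N) :
    ‖x - sigmaRefl α y‖^2 = ‖x - y‖^2 + 2*(⟪α, x⟫ * ⟪α, y⟫) := by
  rw [sigmaRefl_apply hαα]
  have h1 : x - (y - ⟪α, y⟫ • α) = (x - y) + ⟪α, y⟫ • α := by abel
  rw [h1, norm_add_sq_real]
  have h2 : ⟪x - y, ⟪α, y⟫ • α⟫ = ⟪α, y⟫ * (⟪x, α⟫ - ⟪y, α⟫) := by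
    rw [real_inner_smul_right, inner_sub_left]
  have h3 : ‖⟪α, y⟫ • α‖^2 = ⟪α, y⟫^2 * 2 := by
    rw [norm_smul, mul_pow, show ‖α‖^2 = (2:ℝ) from by rw [← real_inner_self_eq_norm_sq, hαα]]
    rw [Real.norm_eq_abs, sq_abs]
  rw [h2, h3]
  have h4 : ⟪x, α⟫ = ⟪α, x⟫ := real_inner_comm _ _
  have h5 : ⟪y, α⟫ = ⟪α, y⟫ := real_inner_comm _ _
  rw [h4, h5]
  ring

lemma sep_of_not_dec {α : Euc N} (hαα : ⟪α, α⟫ = (2:ℝ)) {x y : Euc N}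
    (h : ‖x - y‖ ≤ ‖x - sigmaRefl α y‖) : 0 ≤ ⟪α, x⟫ * ⟪α, y⟫ := by
  have hsq : ‖x - y‖^2 ≤ ‖x - sigmaRefl α y‖^2 :=
    pow_le_pow_left₀ (norm_nonneg _) h 2
  rw [norm_sub_sigma_sq hαα] at hsq
  linarith

lemma norm_le_of_inner_le (w : Euc N ≃ₗᵢ[ℝ] Euc N) (x y : Euc N)
    (h : ⟪x, w y⟫ ≤ ⟪x, y⟫) : ‖x - y‖ ≤ ‖x - w y‖ := by
  have hsq : ‖x - y‖^2 ≤ ‖x - w y‖^2 := by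
    rw [norm_sub_sq_real, norm_sub_sq_real, w.norm_map y]
    linarith
  exact le_of_pow_le_pow_left₀ two_ne_zero (norm_nonneg _) hsq

/-! ### Orbit distance facts -/

lemma orbDist_bddBelow (G : Subgroup (Euc N ≃ₗᵢ[ℝ] Euc N)) (x y : Euc N) :
    BddBelow (Set.range fun σ : G => ‖x - (σ : Euc N ≃ₗᵢ[ℝ] Euc N) y‖) := by
  refine ⟨0, ?_⟩
  rintro r ⟨σ, rfl⟩
  exact norm_nonneg _

lemma orbDist_le (G : Subgroup (Euc N ≃ₗᵢ[ℝ] Euc N)) (x y : Euc N) (σ : G) :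
    orbDist G x y ≤ ‖x - (σ : Euc N ≃ₗᵢ[ℝ] Euc N) y‖ :=
  ciInf_le (orbDist_bddBelow G x y) σ

lemma orbDist_attained (G : Subgroup (Euc N ≃ₗᵢ[ℝ] Euc N)) [Finite G] (x y : Euc N) :
    ∃ σ : G, orbDist G x y = ‖x - (σ : Euc N ≃ₗᵢ[ℝ] Euc N) y‖ := by
  haveI : Nonempty G := ⟨1⟩
  haveI : Fintype G := Fintype.ofFinite _
  obtain ⟨σ₀, _, hσ₀⟩ := Finset.exists_min_image Finset.univ
    (fun σ : G => ‖x - (σ : Euc N ≃ₗᵢ[ℝ] Euc N) y‖) ⟨1, Finset.mem_univ _⟩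
  refine ⟨σ₀, le_antisymm (orbDist_le G x y σ₀) ?_⟩
  exact le_ciInf fun σ => hσ₀ σ (Finset.mem_univ σ)

lemma orbDist_orbit (G : Subgroup (Euc N ≃ₗᵢ[ℝ] Euc N)) (x y : Euc N) (σ : G) :
    orbDist G x ((σ : Euc N ≃ₗᵢ[ℝ] Euc N) y) = orbDist G x y := by
  have hrange : (Set.range fun τ : G => ‖x - (τ : Euc N ≃ₗᵢ[ℝ] Euc N)
      ((σ : Euc N ≃ₗᵢ[ℝ] Euc N) y)‖)
      = Set.range fun τ : G => ‖x - (τ : Euc N ≃ₗᵢ[ℝ] Euc N) y‖ := by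
    ext r
    constructor
    · rintro ⟨τ, rfl⟩
      refine ⟨τ * σ, ?_⟩
      have h2 : ((τ * σ : G) : Euc N ≃ₗᵢ[ℝ] Euc N) y
          = (τ : Euc N ≃ₗᵢ[ℝ] Euc N) ((σ : Euc N ≃ₗᵢ[ℝ] Euc N) y) := rfl
      dsimp only
      rw [h2]
    · rintro ⟨τ, rfl⟩
      refine ⟨τ * σ⁻¹, ?_⟩
      have : ((τ * σ⁻¹ : G) : Euc N ≃ₗᵢ[ℝ] Euc N) ((σ : Euc N ≃ₗᵢ[ℝ] Euc N) y)
          = (τ : Euc N ≃ₗᵢ[ℝ] Euc N) y := by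
        have h1 : ((τ * σ⁻¹ : G) : Euc N ≃ₗᵢ[ℝ] Euc N)
            = (τ : Euc N ≃ₗᵢ[ℝ] Euc N) * ((σ : Euc N ≃ₗᵢ[ℝ] Euc N))⁻¹ := rfl
        rw [h1, gl_mul_apply]
        congr 1
        exact (σ : Euc N ≃ₗᵢ[ℝ] Euc N).symm_apply_apply y
      dsimp only
      rw [this]
  rw [orbDist, orbDist, iInf, iInf, hrange]

/-! ### The key lemma -/

lemma key_lemma (R : Finset (Euc N)) (hR : IsNormalizedRootSystem R)
    (x y : Euc N) (h : orbDist (coxeterGroup R) x y < ‖x - y‖) :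
    ∃ α ∈ R, ‖x - sigmaRefl α y‖ < ‖x - y‖ := by
  by_contra hno
  push_neg at hno
  have hS : ∀ α ∈ R, 0 ≤ ⟪α, x⟫ * ⟪α, y⟫ :=
    fun α hα => sep_of_not_dec (inner_self_two hR hα) (hno α hα)
  have hC := claimC R hR x y hS
  have hge : ∀ σ : coxeterGroup R, ‖x - y‖ ≤ ‖x - (σ : Euc N ≃ₗᵢ[ℝ] Euc N) y‖ :=
    fun σ => norm_le_of_inner_le _ x y (hC _ σ.2)
  haveI : Nonempty (coxeterGroup R) := ⟨1⟩
  have : ‖x - y‖ ≤ orbDist (coxeterGroup R) x y := le_ciInf hge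
  linarith

/-! ### The chain construction -/

lemma chain_aux (R : Finset (Euc N)) (hR : IsNormalizedRootSystem R)
    [Finite (coxeterGroup R)] (x y : Euc N) :
    ∀ (n : ℕ) (y' : Euc N),
      (∃ σ : coxeterGroup R, (σ : Euc N ≃ₗᵢ[ℝ] Euc N) y = y') →
      orbDist (coxeterGroup R) x y < ‖x - y'‖ →
      ({σ : coxeterGroup R | ‖x - (σ : Euc N ≃ₗᵢ[ℝ] Euc N) y‖ < ‖x - y'‖}).ncard ≤ n →
      ∃ (m : ℕ) (a : ℕ → Euc N), 1 ≤ m ∧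
        m ≤ ({σ : coxeterGroup R | ‖x - (σ : Euc N ≃ₗᵢ[ℝ] Euc N) y‖ < ‖x - y'‖}).ncard ∧
        (∀ j < m, a j ∈ R) ∧
        (∀ j < m, ‖x - chainPt a y' (j+1)‖ < ‖x - chainPt a y' j‖) ∧
        ‖x - chainPt a y' m‖ = orbDist (coxeterGroup R) x y := by
  intro n
  induction n with
  | zero =>
    intro y' horb hlt hcard
    exfalso
    obtain ⟨σ₀, hσ₀⟩ := orbDist_attained (coxeterGroup R) x y
    have hmem : σ₀ ∈ {σ : coxeterGroup R |
        ‖x - (σ : Euc N ≃ₗᵢ[ℝ] Euc N) y‖ < ‖x - y'‖} := by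
      rw [Set.mem_setOf_eq, ← hσ₀]
      exact hlt
    have hpos := (Set.ncard_pos (Set.toFinite _)).mpr ⟨σ₀, hmem⟩
    omega
  | succ n IH =>
    intro y' horb hlt hcard
    obtain ⟨σ', hσ'⟩ := horb
    have horbeq : orbDist (coxeterGroup R) x y' = orbDist (coxeterGroup R) x y := by
      rw [← hσ']
      exact orbDist_orbit _ x y σ'
    obtain ⟨α, hαR, hdec⟩ := key_lemma R hR x y' (by rw [horbeq]; exact hlt)
    set τ' : coxeterGroup R := (⟨sigmaRefl α, sigma_mem_cox hαR⟩ : coxeterGroup R) * σ'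
      with hτ'def
    have hτ'y : (τ' : Euc N ≃ₗᵢ[ℝ] Euc N) y = sigmaRefl α y' := by
      have h1 : (τ' : Euc N ≃ₗᵢ[ℝ] Euc N) y
          = sigmaRefl α ((σ' : Euc N ≃ₗᵢ[ℝ] Euc N) y) := rfl
      rw [h1, hσ']
    have hd_le : orbDist (coxeterGroup R) x y ≤ ‖x - sigmaRefl α y'‖ := by
      have h1 := orbDist_le (coxeterGroup R) x y τ'
      rwa [hτ'y] at h1
    have hone_mem : 0 < ({σ : coxeterGroup R |
        ‖x - (σ : Euc N ≃ₗᵢ[ℝ] Euc N) y‖ < ‖x - y'‖}).ncard := by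
      obtain ⟨σ₀, hσ₀⟩ := orbDist_attained (coxeterGroup R) x y
      refine (Set.ncard_pos (Set.toFinite _)).mpr ⟨σ₀, ?_⟩
      rw [Set.mem_setOf_eq, ← hσ₀]
      exact hlt
    rcases eq_or_lt_of_le hd_le with heq | hlt'' 
    · refine ⟨1, fun _ => α, le_rfl, hone_mem, ?_, ?_, ?_⟩
      · intro j hj
        have : j = 0 := by omega
        subst this
        exact hαR
      · intro j hj
        have : j = 0 := by omega
        subst this
        have h1 : chainPt (fun _ => α) y' 1 = sigmaRefl α y' := rfl
        have h0 : chainPt (fun _ => α) y' 0 = y' := rfl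
        rw [h1, h0]
        exact hdec
      · have h1 : chainPt (fun _ => α) y' 1 = sigmaRefl α y' := rfl
        rw [h1]
        exact heq.symm
    · have horb'' : ∃ σ : coxeterGroup R,
          (σ : Euc N ≃ₗᵢ[ℝ] Euc N) y = sigmaRefl α y' := ⟨τ', hτ'y⟩
      have hsub : {σ : coxeterGroup R |
            ‖x - (σ : Euc N ≃ₗᵢ[ℝ] Euc N) y‖ < ‖x - sigmaRefl α y'‖}
          ⊆ {σ : coxeterGroup R |
            ‖x - (σ : Euc N ≃ₗᵢ[ℝ] Euc N) y‖ < ‖x - y'‖} := by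
        intro σ hσ
        rw [Set.mem_setOf_eq] at hσ ⊢
        exact lt_trans hσ hdec
      have hτ'S : τ' ∈ {σ : coxeterGroup R |
          ‖x - (σ : Euc N ≃ₗᵢ[ℝ] Euc N) y‖ < ‖x - y'‖} := by
        rw [Set.mem_setOf_eq, hτ'y]
        exact hdec
      have hτ'not : τ' ∉ {σ : coxeterGroup R |
          ‖x - (σ : Euc N ≃ₗᵢ[ℝ] Euc N) y‖ < ‖x - sigmaRefl α y'‖} := by
        rw [Set.mem_setOf_eq, hτ'y]
        exact lt_irrefl _
      have hss := (Set.ssubset_iff_of_subset hsub).mpr ⟨τ', hτ'S, hτ'not⟩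
      have hcard'' := Set.ncard_lt_ncard hss (Set.toFinite _)
      obtain ⟨m'', a'', hm1, hmcard, hmem'', hdec'', hfin''⟩ :=
        IH (sigmaRefl α y') horb'' hlt'' (by omega)
      have hshift : ∀ j, chainPt (fun k => if k = 0 then α else a'' (k-1)) y' (j+1)
          = chainPt a'' (sigmaRefl α y') j := by
        intro j
        induction j with
        | zero => simp [chainPt]
        | succ j IHj =>
          have h1 : chainPt (fun k => if k = 0 then α else a'' (k-1)) y' (j+1+1)
              = sigmaRefl (if (j+1) = 0 then α else a'' (j+1-1))
                (chainPt (fun k => if k = 0 then α else a'' (k-1)) y' (j+1)) := rfl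
          rw [h1, IHj, if_neg (Nat.succ_ne_zero j)]
          rfl
      refine ⟨m'' + 1, fun k => if k = 0 then α else a'' (k-1), by omega, by omega, ?_, ?_, ?_⟩
      · intro j hj
        by_cases hj0 : j = 0
        · subst hj0
          simpa using hαR
        · show (if j = 0 then α else a'' (j-1)) ∈ R
          rw [if_neg hj0]
          exact hmem'' (j-1) (by omega)
      · intro j hj
        rcases Nat.eq_zero_or_pos j with hj0 | hjpos
        · subst hj0
          have h1 := hshift 0
          have h0 : chainPt (fun k => if k = 0 then α else a'' (k-1)) y' 0 = y' := rfl
          rw [h1, h0]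
          exact hdec
        · obtain ⟨k, rfl⟩ : ∃ k, j = k + 1 := ⟨j - 1, by omega⟩
          rw [hshift (k+1), hshift k]
          exact hdec'' k (by omega)
      · rw [show m'' + 1 = m'' + 1 from rfl, hshift m'']
        exact hfin''

end ReflChain

/-- existence of a strictly distance-decreasing chain of at most `|G|`
reflections bringing `y` to distance `d(x,y)` from `x`. -/
theorem exists_decreasing_reflection_chain {N : ℕ} (R : Finset (Euc N))
    (hR : IsNormalizedRootSystem R) (hG : Finite (coxeterGroup R)) (x y : Euc N)
    (h : orbDist (coxeterGroup R) x y < ‖x - y‖) :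
    ∃ m : ℕ, 1 ≤ m ∧ m ≤ Nat.card (coxeterGroup R) ∧
      ∃ a : ℕ → Euc N, (∀ j < m, a j ∈ R) ∧
        (∀ j < m, ‖x - chainPt a y (j + 1)‖ < ‖x - chainPt a y j‖) ∧
        ‖x - chainPt a y m‖ = orbDist (coxeterGroup R) x y := by
  have h1 : ∃ σ : coxeterGroup R, (σ : Euc N ≃ₗᵢ[ℝ] Euc N) y = y := ⟨1, rfl⟩
  obtain ⟨m, a, hm1, hmcard, hmem, hdec, hfin⟩ :=
    ReflChain.chain_aux R hR x y
      ({σ : coxeterGroup R | ‖x - (σ : Euc N ≃ₗᵢ[ℝ] Euc N) y‖ < ‖x - y‖}).ncard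
      y h1 h le_rfl
  have h2 : ({σ : coxeterGroup R | ‖x - (σ : Euc N ≃ₗᵢ[ℝ] Euc N) y‖ < ‖x - y‖}).ncard
      ≤ Nat.card (coxeterGroup R) := by
    rw [← Set.ncard_univ]
    exact Set.ncard_le_ncard (Set.subset_univ _) Set.finite_univ
  exact ⟨m, hm1, by omega, a, hmem, hdec, hfin⟩
end
end

section
/- Let μ be a probability measure on ℝ^N supported in the convex hull of the orbit 𝒪(x) = {σ(x) : σ ∈ G} of x under a finite group G of orthogonal transformations. Define A(x,y,η) = √(‖x‖² + ‖y‖² − 2⟨y,η⟩) and d(x,y) = min_{σ∈G}‖x − σ(y)‖. Then for every η ∈ conv 𝒪(x), d(x,y) ≤ A(x,y,η). (In particular ‖x‖² + ‖y‖² − 2⟨y,η⟩ ≥ d(x,y)² ≥ 0.) -/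
open scoped RealInnerProductSpace
noncomputable section

open MeasureTheory in
/-- `d(x,y) ≤ A(x,y,η)` for `η` in the convex hull of the orbit of `x`. -/
theorem orbDist_le_A {N : ℕ} (G : Subgroup (Euc N ≃ₗᵢ[ℝ] Euc N)) (hG : Finite G)
    (x y : Euc N) (μ : Measure (Euc N)) (hμ : IsProbabilityMeasure μ)
    (hsupp : μ (convexHull ℝ {z : Euc N | ∃ σ ∈ G, z = σ x})ᶜ = 0) :
    ∀ η ∈ convexHull ℝ {z : Euc N | ∃ σ ∈ G, z = σ x},
      orbDist G x y ≤ Real.sqrt (‖x‖ ^ 2 + ‖y‖ ^ 2 - 2 * ⟪y, η⟫) ∧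
      orbDist G x y ^ 2 ≤ ‖x‖ ^ 2 + ‖y‖ ^ 2 - 2 * ⟪y, η⟫ ∧
      (0:ℝ) ≤ ‖x‖ ^ 2 + ‖y‖ ^ 2 - 2 * ⟪y, η⟫ := by
  intro η hη
  set d : ℝ := orbDist G x y with hd
  have hd0 : 0 ≤ d := Real.iInf_nonneg fun σ => norm_nonneg _
  have hbdd : BddBelow (Set.range fun σ : G => ‖x - (σ : Euc N ≃ₗᵢ[ℝ] Euc N) y‖) :=
    ⟨0, by rintro r ⟨σ, rfl⟩; exact norm_nonneg _⟩
  have hle : ∀ σ : G, d ≤ ‖x - (σ : Euc N ≃ₗᵢ[ℝ] Euc N) y‖ := fun σ => ciInf_le hbdd σ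
  -- the key inequality on orbit points
  have hkey : ∀ z ∈ {z : Euc N | ∃ σ ∈ G, z = σ x},
      d ^ 2 ≤ ‖x‖ ^ 2 + ‖y‖ ^ 2 - 2 * ⟪y, z⟫ := by
    rintro z ⟨σ, hσ, rfl⟩
    have h1 : ‖x‖ ^ 2 + ‖y‖ ^ 2 - 2 * ⟪y, σ x⟫ = ‖σ x - y‖ ^ 2 := by
      rw [norm_sub_sq_real, ← real_inner_comm (σ x) y]
      have : ‖σ x‖ = ‖x‖ := σ.norm_map x
      rw [this]; ring
    have h2 : ‖σ x - y‖ = ‖x - σ⁻¹ y‖ := by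
      have := (σ : Euc N ≃ₗᵢ[ℝ] Euc N).norm_map (x - σ⁻¹ y)
      rw [map_sub] at this
      have h3 : σ (σ⁻¹ y) = y := σ.apply_symm_apply y
      rw [h3] at this
      exact this
    rw [h1, h2]
    have := hle ⟨σ⁻¹, inv_mem hσ⟩
    exact pow_le_pow_left₀ hd0 this 2
  -- convexity of the superlevel set of the affine function
  have hconv : Convex ℝ {w : Euc N | d ^ 2 ≤ ‖x‖ ^ 2 + ‖y‖ ^ 2 - 2 * ⟪y, w⟫} := by
    have hlin : IsLinearMap ℝ (fun w : Euc N => ⟪y, w⟫) :=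
      ⟨fun a b => inner_add_right y a b, fun c a => real_inner_smul_right y a c⟩
    have : {w : Euc N | d ^ 2 ≤ ‖x‖ ^ 2 + ‖y‖ ^ 2 - 2 * ⟪y, w⟫}
        = {w : Euc N | (fun w : Euc N => ⟪y, w⟫) w ≤ (‖x‖ ^ 2 + ‖y‖ ^ 2 - d ^ 2) / 2} := by
      ext w; simp only [Set.mem_setOf_eq]; constructor <;> intro h <;> linarith
    rw [this]
    exact convex_halfSpace_le hlin _
  have hmem : η ∈ {w : Euc N | d ^ 2 ≤ ‖x‖ ^ 2 + ‖y‖ ^ 2 - 2 * ⟪y, w⟫} :=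
    convexHull_min hkey hconv hη
  have h2 : d ^ 2 ≤ ‖x‖ ^ 2 + ‖y‖ ^ 2 - 2 * ⟪y, η⟫ := hmem
  have h3 : (0:ℝ) ≤ ‖x‖ ^ 2 + ‖y‖ ^ 2 - 2 * ⟪y, η⟫ := le_trans (by positivity) h2
  refine ⟨?_, h2, h3⟩
  exact (Real.le_sqrt hd0 h3).mpr h2
end
end
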